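/- arXiv:0809.0137 — 8 statements merged into one kernel-verified Lean document; each statement's English description precedes it below -/
import Mathlib

section
/- For X = (x₀, …, x_{d+1}) ∈ H^{d+2} with all pairwise distances positive, the generalized law of sines holds: for all 0 ≤ i < j ≤ d+1, p_d sin_{x_i}(X) divided by the product of ‖x_s − x_r‖ over all pairs 0 ≤ s < r ≤ d+1 with s, r ≠ i, equals p_d sin_{x_j}(X) divided by the product of ‖x_ℓ − x_q‖ over all pairs 0 ≤ ℓ < q ≤ d+1 with ℓ, q ≠ j. -/
open Metric Finset

noncomputable section

/-- The n-content M_n of the points y₀,…,y_n: n! times the n-volume of their simplex,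
computed as the square root of the Gram determinant of (yᵢ − y₀). -/
def simplexContent {H : Type*} [NormedAddCommGroup H] [InnerProductSpace ℝ H]
    (n : ℕ) (y : Fin (n + 1) → H) : ℝ :=
  Real.sqrt (Matrix.det (Matrix.of fun i j : Fin n =>
    (inner ℝ (y i.succ - y 0) (y j.succ - y 0) : ℝ)))

/-- The polar sine of the (d+1)-simplex X at the vertex X i:
p_d sin_{x_i}(X) = M_{d+1}(X) / ∏_{j ≠ i} ‖x_j − x_i‖ (0 when the denominator vanishes). -/
def polarSin {H : Type*} [NormedAddCommGroup H] [InnerProductSpace ℝ H]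
    {n : ℕ} (X : Fin (n + 2) → H) (i : Fin (n + 2)) : ℝ :=
  simplexContent (n + 1) X / ∏ j ∈ Finset.univ.erase i, dist (X j) (X i)


lemma pair_prod {H : Type*} [NormedAddCommGroup H] {m : ℕ} (X : Fin m → H) (i : Fin m) :
    (∏ k ∈ Finset.univ.erase i, dist (X k) (X i)) *
      ∏ p ∈ Finset.univ.filter
        (fun p : Fin m × Fin m => p.1 < p.2 ∧ p.1 ≠ i ∧ p.2 ≠ i), dist (X p.1) (X p.2) =
    ∏ p ∈ Finset.univ.filter (fun p : Fin m × Fin m => p.1 < p.2), dist (X p.1) (X p.2) := by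
  have h := Finset.prod_filter_mul_prod_filter_not
    (Finset.univ.filter (fun p : Fin m × Fin m => p.1 < p.2))
    (fun p : Fin m × Fin m => p.1 ≠ i ∧ p.2 ≠ i) (fun p => dist (X p.1) (X p.2))
  rw [Finset.filter_filter, Finset.filter_filter] at h
  rw [← h, mul_comm]
  congr 1
  refine Finset.prod_nbij' (fun k => if k < i then (k, i) else (i, k))
    (fun p => if p.1 = i then p.2 else p.1) ?_ ?_ ?_ ?_ ?_
  · intro k hk
    simp only [Finset.mem_erase] at hk
    rcases lt_or_gt_of_ne hk.1 with h1 | h1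
    · simp [h1, hk.1, ne_of_lt h1]
    · simp [not_lt.2 h1.le, h1, (ne_of_gt h1)]
  · intro p hp
    simp only [Finset.mem_filter, Finset.mem_univ, true_and, not_and_or, not_ne_iff] at hp
    rcases hp.2 with h1 | h1
    · simp [h1, Finset.mem_erase, (ne_of_gt (h1 ▸ hp.1))]
    · simp only [Finset.mem_erase, Finset.mem_univ, and_true]
      have : p.1 ≠ i := by rw [← h1] at *; exact ne_of_lt hp.1
      simp [this]
  · intro k hk
    simp only [Finset.mem_erase] at hk
    rcases lt_or_gt_of_ne hk.1 with h1 | h1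
    · simp [h1, ne_of_lt h1]
    · simp [not_lt.2 h1.le, (ne_of_gt h1)]
  · intro p hp
    simp only [Finset.mem_filter, Finset.mem_univ, true_and, not_and_or, not_ne_iff] at hp
    rcases hp.2 with h1 | h1
    · have hlt : i < p.2 := h1 ▸ hp.1
      simp [h1, not_lt.2 hlt.le, ne_of_gt hlt, Prod.ext_iff]
    · have hlt : p.1 < i := h1 ▸ hp.1
      simp [hlt, ne_of_lt hlt, h1, Prod.ext_iff]
  · intro k hk
    simp only [Finset.mem_erase] at hk
    rcases lt_or_gt_of_ne hk.1 with h1 | h1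
    · simp [h1]
    · simp [not_lt.2 h1.le, dist_comm]


/-- Generalized law of sines: for 0 ≤ i < j ≤ d+1,
psin_{x_i}(X) / ∏_{s<r, s,r≠i} ‖x_s−x_r‖ = psin_{x_j}(X) / ∏_{ℓ<q, ℓ,q≠j} ‖x_ℓ−x_q‖. -/
theorem law_of_polar_sines {H : Type*} [NormedAddCommGroup H] [InnerProductSpace ℝ H]
    (d : ℕ) (hd : 1 ≤ d) (X : Fin (d + 2) → H)
    (hpos : ∀ i j : Fin (d + 2), i ≠ j → 0 < dist (X i) (X j))
    (i j : Fin (d + 2)) (hij : i < j) :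
    polarSin X i /
        ∏ p ∈ Finset.univ.filter
          (fun p : Fin (d + 2) × Fin (d + 2) => p.1 < p.2 ∧ p.1 ≠ i ∧ p.2 ≠ i),
          dist (X p.1) (X p.2) =
      polarSin X j /
        ∏ p ∈ Finset.univ.filter
          (fun p : Fin (d + 2) × Fin (d + 2) => p.1 < p.2 ∧ p.1 ≠ j ∧ p.2 ≠ j),
          dist (X p.1) (X p.2) := by
  rw [polarSin, polarSin, div_div, div_div, pair_prod X i, pair_prod X j]
end
end

section
/- For X = (x₀,…,x_{d+1}) ∈ H^{d+2} and any 1 ≤ i ≤ d+1, the product formula p_d sin_{x₀}(X) = sin(θ_i(X)) · p_{d−1}sin_{x₀}(X(i)) holds, where θ_i(X) is the elevation angle of x_i − x₀ with respect to the linear span of {x_j − x₀ : j ≠ i, j ≥ 1}, and X(i) is X with the i-th coordinate removed. -/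
open Metric Finset

noncomputable section

lemma gram_cons_det {H : Type*} [NormedAddCommGroup H] [InnerProductSpace ℝ H] {m : ℕ}
    (v : Fin m → H) (w : H) :
    Matrix.det (Matrix.of fun i j : Fin (m + 1) =>
      (inner ℝ ((Fin.cons w v : Fin (m + 1) → H) i) ((Fin.cons w v : Fin (m + 1) → H) j) : ℝ)) =
    (Metric.infDist w ((Submodule.span ℝ (Set.range v) : Submodule ℝ H) : Set H)) ^ 2 *
      Matrix.det (Matrix.of fun i j : Fin m => (inner ℝ (v i) (v j) : ℝ)) := by
  classical
  set K := Submodule.span ℝ (Set.range v) with hK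
  haveI : FiniteDimensional ℝ K := FiniteDimensional.span_of_finite ℝ (Set.finite_range v)
  set p : H := (K.orthogonalProjectionOnto w : H) with hp
  have hpK : p ∈ K := (K.orthogonalProjectionOnto w).2
  have hqK : w - p ∈ Kᗮ := K.sub_starProjection_mem_orthogonal w
  have hq0 : ∀ y ∈ K, (inner ℝ (w - p) y : ℝ) = 0 := by
    intro y hy
    rw [real_inner_comm]
    exact (Submodule.mem_orthogonal K _).1 hqK y hy
  have hvK : ∀ j, v j ∈ K := fun j => Submodule.subset_span ⟨j, rfl⟩
  have hd : infDist w (K : Set H) = ‖w - p‖ := by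
    refine le_antisymm ?_ ?_
    · simpa [dist_eq_norm] using infDist_le_dist_of_mem (x := w) hpK
    · by_contra h
      push_neg at h
      obtain ⟨y, hyK, hy⟩ := (infDist_lt_iff ⟨p, hpK⟩).1 h
      have hpy : p - y ∈ K := K.sub_mem hpK hyK
      have hsq : dist w y ^ 2 = ‖w - p‖ ^ 2 + ‖p - y‖ ^ 2 := by
        have hw : w - y = (w - p) + (p - y) := by abel
        rw [dist_eq_norm, hw, norm_add_sq_real, hq0 _ hpy]
        ring
      nlinarith [norm_nonneg (p - y), dist_nonneg (x := w) (y := y), norm_nonneg (w - p)]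
  set M : Matrix (Fin (m + 1)) (Fin (m + 1)) ℝ :=
    Matrix.of fun i j : Fin (m + 1) => (inner ℝ ((Fin.cons w v : Fin (m + 1) → H) i) ((Fin.cons w v : Fin (m + 1) → H) j) : ℝ) with hM
  have hrow : M 0 = (fun j => (inner ℝ p ((Fin.cons w v : Fin (m + 1) → H) j) : ℝ)) +
      (fun j => (inner ℝ (w - p) ((Fin.cons w v : Fin (m + 1) → H) j) : ℝ)) := by
    funext j
    simp only [hM, Matrix.of_apply, Fin.cons_zero, Pi.add_apply, inner_sub_left]
    ring
  obtain ⟨c, hc⟩ := (Submodule.mem_span_range_iff_exists_fun ℝ).1 hpK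
  have hr1 : (fun j => (inner ℝ p ((Fin.cons w v : Fin (m + 1) → H) j) : ℝ)) =
      ∑ k : Fin (m + 1), (Fin.cons 0 c : Fin (m + 1) → ℝ) k • M k := by
    funext j
    rw [← hc, sum_inner]
    simp [Fin.sum_univ_succ, real_inner_smul_left, hM, Finset.sum_apply]
  have h1 : (M.updateRow 0 (fun j => (inner ℝ p ((Fin.cons w v : Fin (m + 1) → H) j) : ℝ))).det = 0 := by
    rw [hr1, Matrix.det_updateRow_sum]
    simp
  have h2 : (M.updateRow 0 (fun j => (inner ℝ (w - p) ((Fin.cons w v : Fin (m + 1) → H) j) : ℝ))).det =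
      ‖w - p‖ ^ 2 * Matrix.det (Matrix.of fun i j : Fin m => (inner ℝ (v i) (v j) : ℝ)) := by
    rw [Matrix.det_succ_row_zero, Fin.sum_univ_succ]
    have hz : ∀ j : Fin m,
        (M.updateRow 0 (fun j => (inner ℝ (w - p) ((Fin.cons w v : Fin (m + 1) → H) j) : ℝ))) 0 j.succ = 0 := by
      intro j
      simp only [Matrix.updateRow_self]
      simpa using hq0 _ (hvK j)
    have h00 : (M.updateRow 0 (fun j => (inner ℝ (w - p) ((Fin.cons w v : Fin (m + 1) → H) j) : ℝ))) 0 0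
        = ‖w - p‖ ^ 2 := by
      simp only [Matrix.updateRow_self, Fin.cons_zero]
      have : (inner ℝ (w - p) w : ℝ) = (inner ℝ (w - p) (w - p) : ℝ) + (inner ℝ (w - p) p : ℝ) := by
        rw [← inner_add_right]; norm_num
      rw [this, hq0 _ hpK, real_inner_self_eq_norm_sq]
      ring
    have hsub : (M.updateRow 0 (fun j => (inner ℝ (w - p) ((Fin.cons w v : Fin (m + 1) → H) j) : ℝ))).submatrix
        Fin.succ ((0 : Fin (m + 1)).succAbove) =
        Matrix.of fun i j : Fin m => (inner ℝ (v i) (v j) : ℝ) := by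
      ext a b
      simp [Matrix.updateRow_ne (Fin.succ_ne_zero a), hM, Fin.succAbove_zero]
    rw [h00, hsub]
    simp [hz]
  calc M.det = (M.updateRow 0 (M 0)).det := by rw [Matrix.updateRow_eq_self]
    _ = _ := by
        rw [hrow, Matrix.det_updateRow_add, h1, h2, hd, zero_add]

lemma infDist_eq_infDist_direction {H : Type*} [NormedAddCommGroup H] [InnerProductSpace ℝ H]
    (S : AffineSubspace ℝ H) {x0 : H} (h0 : x0 ∈ S) (y : H) :
    Metric.infDist y (S : Set H) = Metric.infDist (y - x0) (S.direction : Set H) := by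
  have hiso : Isometry (fun v : H => x0 + v) :=
    Isometry.of_dist_eq fun a b => by simp [dist_add_left]
  have himg : (fun v : H => x0 + v) '' (S.direction : Set H) = (S : Set H) := by
    ext z
    constructor
    · rintro ⟨v, hv, rfl⟩
      simpa [add_comm] using AffineSubspace.vadd_mem_of_mem_direction hv h0
    · intro hz
      exact ⟨z - x0, AffineSubspace.vsub_mem_direction hz h0, by simp⟩
  calc Metric.infDist y (S : Set H)
      = Metric.infDist ((fun v : H => x0 + v) (y - x0))
          ((fun v : H => x0 + v) '' (S.direction : Set H)) := by rw [himg]; norm_num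
    _ = Metric.infDist (y - x0) (S.direction : Set H) := Metric.infDist_image hiso

lemma prod_erase_zero' {M : Type*} [CommMonoid M] {n : ℕ} (f : Fin (n + 1) → M) :
    ∏ j ∈ Finset.univ.erase 0, f j = ∏ j : Fin n, f j.succ := by
  rw [show (Finset.univ.erase (0 : Fin (n + 1))) = Finset.image Fin.succ Finset.univ from ?_,
      Finset.prod_image (fun a _ b _ h => Fin.succ_injective n h)]
  ext x
  simp [Fin.exists_succ_eq, eq_comm]


/-- The smallest pairwise distance among the coordinates of X. -/
def tmin {H : Type*} [PseudoMetricSpace H] {n : ℕ} (X : Fin n → H) : ℝ :=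
  sInf {r | ∃ i j, i ≠ j ∧ r = dist (X i) (X j)}

/-- Product formula: p_d sin_{x₀}(X) = sin(θ_i(X)) · p_{d−1} sin_{x₀}(X(i)), where
sin(θ_i(X)) = dist(x_i, L[X(i)]) / ‖x_i − x₀‖ and X(i) drops the i-th coordinate.
(Here d = e + 1 ≥ 1.) -/
theorem polarSin_product_formula {H : Type*} [NormedAddCommGroup H] [InnerProductSpace ℝ H]
    (e : ℕ) (X : Fin (e + 3) → H) (i : Fin (e + 3)) (hi : 1 ≤ (i : ℕ))
    (hmin : 0 < tmin X) :
    polarSin X 0 =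
      (Metric.infDist (X i) ((affineSpan ℝ (Set.range (X ∘ i.succAbove)) : AffineSubspace ℝ H) : Set H)
          / dist (X i) (X 0)) *
        polarSin (X ∘ i.succAbove) 0 := by
  classical
  have hi0 : i ≠ 0 := by
    intro h
    rw [h] at hi
    simp at hi
  have hipos : (0 : Fin (e + 3)) < i := Fin.pos_iff_ne_zero.2 hi0
  set ℓ : Fin (e + 2) := i.pred hi0 with hℓdef
  have hℓ : ℓ.succ = i := Fin.succ_pred i hi0
  have hX0 : (X ∘ i.succAbove) 0 = X 0 := by
    simp [Function.comp, Fin.succAbove_of_castSucc_lt, hipos, Fin.succAbove_ne_zero_zero hi0]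
  set u : Fin (e + 2) → H := fun j => X j.succ - X 0 with hu
  have hcomp : u ∘ ℓ.succAbove = fun j : Fin (e + 1) => X (i.succAbove j.succ) - X 0 := by
    funext j
    simp only [Function.comp_apply, hu]
    congr 2
    rw [← hℓ]
    exact (Fin.succ_succAbove_succ ℓ j).symm
  -- the full Gram matrix
  set A : Matrix (Fin (e + 2)) (Fin (e + 2)) ℝ :=
    Matrix.of fun a b : Fin (e + 2) => (inner ℝ (u a) (u b) : ℝ) with hA
  have hAperm : A.det = Matrix.det (Matrix.of fun a b : Fin (e + 2) =>
      (inner ℝ ((Fin.cons (u ℓ) (u ∘ ℓ.succAbove) : Fin (e + 2) → H) a)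
        ((Fin.cons (u ℓ) (u ∘ ℓ.succAbove) : Fin (e + 2) → H) b) : ℝ)) := by
    rw [← Matrix.det_submatrix_equiv_self (ℓ.cycleRange.symm : Fin (e + 2) ≃ Fin (e + 2)) A]
    congr 1
    ext a b
    have key : ∀ a : Fin (e + 2), u (ℓ.cycleRange.symm a)
        = (Fin.cons (u ℓ) (u ∘ ℓ.succAbove) : Fin (e + 2) → H) a := by
      intro a
      induction a using Fin.cases with
      | zero => rw [Fin.cycleRange_symm_zero]; rfl
      | succ j => rw [Fin.cycleRange_symm_succ]; rfl
    simp only [Matrix.submatrix_apply, hA, Matrix.of_apply, key]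
  -- distance identification
  set S : AffineSubspace ℝ H := affineSpan ℝ (Set.range (X ∘ i.succAbove)) with hS
  have h0S : X 0 ∈ S := by
    rw [← hX0]
    exact subset_affineSpan ℝ _ ⟨0, rfl⟩
  have hspan : (Submodule.span ℝ (Set.range (u ∘ ℓ.succAbove)) : Submodule ℝ H)
      = S.direction := by
    rw [hcomp, hS, direction_affineSpan,
      vectorSpan_range_eq_span_range_vsub_right ℝ (X ∘ i.succAbove) 0]
    have hfam : (fun j : Fin (e + 2) => (X ∘ i.succAbove) j -ᵥ (X ∘ i.succAbove) 0)
        = Fin.cons 0 (fun j : Fin (e + 1) => X (i.succAbove j.succ) - X 0) := by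
      funext j
      induction j using Fin.cases with
      | zero => simp
      | succ k => simp only [Function.comp_apply, Fin.cons_succ, vsub_eq_sub]
                  rw [show X (i.succAbove 0) = X 0 from hX0]
    rw [hfam, Fin.range_cons, Submodule.span_insert_zero]
  have huℓ : u ℓ = X i - X 0 := by rw [hu]; simp [hℓ]
  have hdist : Metric.infDist (u ℓ)
      ((Submodule.span ℝ (Set.range (u ∘ ℓ.succAbove)) : Submodule ℝ H) : Set H)
      = Metric.infDist (X i) (S : Set H) := by
    rw [hspan, infDist_eq_infDist_direction S h0S (X i), huℓ]
  -- the sub Gram matrix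
  have hsubmat : (Matrix.of fun a b : Fin (e + 1) =>
      (inner ℝ ((u ∘ ℓ.succAbove) a) ((u ∘ ℓ.succAbove) b) : ℝ))
      = Matrix.of fun a b : Fin (e + 1) =>
        (inner ℝ ((X ∘ i.succAbove) a.succ - (X ∘ i.succAbove) 0)
          ((X ∘ i.succAbove) b.succ - (X ∘ i.succAbove) 0) : ℝ) := by
    have hX0' : X (i.succAbove 0) = X 0 := hX0
    rw [hcomp]
    ext a b
    simp only [Matrix.of_apply, Function.comp_apply, hX0']
  set d : ℝ := Metric.infDist (X i) (S : Set H) with hd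
  have hdetA : A.det = d ^ 2 * Matrix.det (Matrix.of fun a b : Fin (e + 1) =>
      (inner ℝ ((X ∘ i.succAbove) a.succ - (X ∘ i.succAbove) 0)
        ((X ∘ i.succAbove) b.succ - (X ∘ i.succAbove) 0) : ℝ)) := by
    rw [hAperm, gram_cons_det (u ∘ ℓ.succAbove) (u ℓ), hsubmat, hdist, hd]
  -- contents
  have hcontent : simplexContent (e + 2) X
      = d * simplexContent (e + 1) (X ∘ i.succAbove) := by
    show Real.sqrt A.det = d * Real.sqrt _
    rw [hdetA, Real.sqrt_mul (sq_nonneg d), Real.sqrt_sq (by rw [hd]; exact Metric.infDist_nonneg)]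
  -- products
  have hprod : ∏ j ∈ Finset.univ.erase (0 : Fin (e + 3)), dist (X j) (X 0)
      = dist (X i) (X 0) * ∏ j ∈ Finset.univ.erase (0 : Fin (e + 2)),
          dist ((X ∘ i.succAbove) j) ((X ∘ i.succAbove) 0) := by
    rw [prod_erase_zero' (fun j => dist (X j) (X 0)),
      prod_erase_zero' (fun j => dist ((X ∘ i.succAbove) j) ((X ∘ i.succAbove) 0)),
      Fin.prod_univ_succAbove (fun j : Fin (e + 2) => dist (X j.succ) (X 0)) ℓ, hℓ]
    congr 1
    refine Finset.prod_congr rfl fun j _ => ?_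
    have : (ℓ.succAbove j).succ = i.succAbove j.succ := by
      rw [← hℓ]; exact (Fin.succ_succAbove_succ ℓ j).symm
    rw [this, hX0]
    rfl
  -- assemble
  rw [polarSin, polarSin, hprod]
  have : simplexContent (e + 2) X = Real.sqrt A.det := rfl
  rw [hcontent, hd, div_mul_div_comm]
end
end

section
/- Let x ∈ H, 0 < t < ∞, and X = (x₀,…,x_{d+1}) ∈ B(x,t)^{d+2}. If for some 0 < ω ≤ 1 and some 1 ≤ i ≤ d+1 one has M_d(X(i)) ≥ ω·t^d, then p_d sin_{x₀}(X) ≥ (ω / 2^{d+1}) · dist(x_i, L[X(i)]) / t. -/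
open Metric Finset

noncomputable section

section GramAux

variable {H : Type*} [NormedAddCommGroup H] [InnerProductSpace ℝ H]

lemma gram_det_factor {n : ℕ} (v : Fin (n + 1) → H) (k : Fin (n + 1)) (w : H)
    (hsub : v k - w ∈ Submodule.span ℝ (Set.range (v ∘ k.succAbove)))
    (hperp : ∀ m : Fin n, (inner ℝ w (v (k.succAbove m)) : ℝ) = 0) :
    Matrix.det (Matrix.of fun a b : Fin (n + 1) => (inner ℝ (v a) (v b) : ℝ)) =
      ‖w‖ ^ 2 *
        Matrix.det (Matrix.of fun a b : Fin n =>
          (inner ℝ (v (k.succAbove a)) (v (k.succAbove b)) : ℝ)) := by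
  obtain ⟨c, hc⟩ := (Submodule.mem_span_range_iff_exists_fun ℝ).1 hsub
  have hwdef : w = v k - ∑ m, c m • v (k.succAbove m) := by
    rw [show (∑ m, c m • v (k.succAbove m)) = v k - w from hc]; abel
  set v' : Fin (n + 1) → H := Function.update v k w with hv'
  set M : Matrix (Fin (n + 1)) (Fin (n + 1)) ℝ :=
    Matrix.of fun a b => (inner ℝ (v a) (v b) : ℝ) with hM
  set c' : Fin (n + 1) → ℝ := k.insertNth 1 (fun m => -(c m)) with hc'
  have hc'k : c' k = 1 := Fin.insertNth_apply_same k 1 _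
  have hc'sa : ∀ m, c' (k.succAbove m) = -(c m) := fun m =>
    Fin.insertNth_apply_succAbove k 1 _ m
  -- the row operation
  have hrow : (fun b => (inner ℝ w (v b) : ℝ)) = ∑ m, c' m • M m := by
    funext b
    rw [Finset.sum_apply, Fin.sum_univ_succAbove (fun m => (c' m • M m) b) k]
    simp only [Pi.smul_apply, hc'k, hc'sa, smul_eq_mul, one_mul]
    rw [hwdef, inner_sub_left, sum_inner]
    simp only [real_inner_smul_left, hM, Matrix.of_apply, neg_mul,
      Finset.sum_neg_distrib, sub_eq_add_neg]
  have hdet1 : (M.updateRow k fun b => (inner ℝ w (v b) : ℝ)).det = M.det := by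
    rw [hrow, Matrix.det_updateRow_sum, hc'k, one_smul]
  set M1 := M.updateRow k (fun b => (inner ℝ w (v b) : ℝ)) with hM1def
  have hM1 : ∀ a b, M1 a b = (inner ℝ (v' a) (v b) : ℝ) := by
    intro a b
    by_cases h : a = k
    · subst h; simp [hM1def, hv', Matrix.updateRow_self]
    · simp [hM1def, Matrix.updateRow_ne h, hv', Function.update_of_ne h, hM]
  -- the column operation
  have hcol : (fun a => (inner ℝ (v' a) w : ℝ)) = fun a => ∑ m, c' m • M1 a m := by
    funext a
    rw [Fin.sum_univ_succAbove (fun m => c' m • M1 a m) k]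
    simp only [hc'k, hc'sa, smul_eq_mul, one_mul, hM1]
    rw [hwdef, inner_sub_right, inner_sum]
    simp only [real_inner_smul_right, neg_mul, Finset.sum_neg_distrib, sub_eq_add_neg]
  have hdet2 : (Matrix.updateCol M1 k fun a => (inner ℝ (v' a) w : ℝ)).det = M1.det := by
    rw [hcol, Matrix.det_updateCol_sum, hc'k, one_smul]
  set M2 := Matrix.updateCol M1 k (fun a => (inner ℝ (v' a) w : ℝ)) with hM2def
  have hM2 : M2 = Matrix.of fun a b => (inner ℝ (v' a) (v' b) : ℝ) := by
    ext a b
    by_cases h : b = k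
    · subst h; simp [hM2def, Matrix.updateCol_self, hv']
    · simp [hM2def, Matrix.updateCol_ne h, hM1, hv', Function.update_of_ne h]
  -- now compute det M2 by expansion along row k
  have hrk : ∀ b, b ≠ k → (inner ℝ (v' k) (v' b) : ℝ) = 0 := by
    intro b hb
    obtain ⟨m, rfl⟩ := Fin.exists_succAbove_eq hb
    rw [hv', Function.update_self, Function.update_of_ne (Fin.succAbove_ne k m)]
    exact hperp m
  have hexp : M2.det = ‖w‖ ^ 2 *
      Matrix.det (Matrix.of fun a b : Fin n =>
        (inner ℝ (v (k.succAbove a)) (v (k.succAbove b)) : ℝ)) := by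
    rw [hM2, Matrix.det_succ_row _ k]
    rw [Finset.sum_eq_single_of_mem k (Finset.mem_univ k)]
    · have h1 : ((-1 : ℝ)) ^ ((k : ℕ) + (k : ℕ)) = 1 := by
        rw [← two_mul, pow_mul]; norm_num
      have h2 : (inner ℝ (v' k) (v' k) : ℝ) = ‖w‖ ^ 2 := by
        rw [hv', Function.update_self, real_inner_self_eq_norm_sq]
      have h3 : ((Matrix.of fun a b => (inner ℝ (v' a) (v' b) : ℝ)).submatrix
          k.succAbove k.succAbove) = Matrix.of fun a b : Fin n =>
            (inner ℝ (v (k.succAbove a)) (v (k.succAbove b)) : ℝ) := by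
        ext a b
        simp [Matrix.submatrix_apply, hv',
          Function.update_of_ne (Fin.succAbove_ne k a),
          Function.update_of_ne (Fin.succAbove_ne k b)]
      rw [h3]
      simp only [Matrix.of_apply, h1, h2, one_mul]
    · intro b _ hb
      have : (Matrix.of fun a b => (inner ℝ (v' a) (v' b) : ℝ)) k b = 0 := hrk b hb
      simp [this]
  calc M.det = M1.det := hdet1.symm
    _ = M2.det := hdet2.symm
    _ = _ := hexp

end GramAux

/-- If X ∈ B(x,t)^{d+2} and M_d(X(i)) ≥ ω·t^d for some 0 < ω ≤ 1 and 1 ≤ i ≤ d+1, then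
p_d sin_{x₀}(X) ≥ (ω/2^{d+1}) · dist(x_i, L[X(i)])/t. -/
theorem polarSin_lower_bound {H : Type*} [NormedAddCommGroup H] [InnerProductSpace ℝ H]
    (d : ℕ) (hd : 1 ≤ d) (x : H) (t : ℝ) (ht : 0 < t)
    (X : Fin (d + 2) → H) (hX : ∀ j, X j ∈ closedBall x t)
    (ω : ℝ) (hω0 : 0 < ω) (hω1 : ω ≤ 1) (i : Fin (d + 2)) (hi : 1 ≤ (i : ℕ))
    (hcont : ω * t ^ d ≤ simplexContent d (X ∘ i.succAbove)) :
    ω / 2 ^ (d + 1) *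
        (Metric.infDist (X i)
            ((affineSpan ℝ (Set.range (X ∘ i.succAbove)) : AffineSubspace ℝ H) : Set H) / t) ≤
      polarSin X 0 := by
  have hi0 : i ≠ 0 := by
    intro h; rw [h] at hi; simp at hi
  set k : Fin (d + 1) := i.pred hi0 with hkdef
  have hk : k.succ = i := Fin.succ_pred i hi0
  set v : Fin (d + 1) → H := fun m => X m.succ - X 0 with hv
  have hsa0 : i.succAbove 0 = 0 := Fin.succAbove_ne_zero_zero hi0
  have hvsa : ∀ a : Fin d, v (k.succAbove a) = X (i.succAbove a.succ) - X 0 := by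
    intro a
    rw [← hk, Fin.succ_succAbove_succ]
  have hMbasepos : 0 < simplexContent d (X ∘ i.succAbove) :=
    lt_of_lt_of_le (by positivity) hcont
  set V := Submodule.span ℝ (Set.range (v ∘ k.succAbove)) with hV
  haveI : FiniteDimensional ℝ V := FiniteDimensional.span_of_finite ℝ (Set.finite_range _)
  set p : H := (V.orthogonalProjectionOnto (v k) : H) with hp
  set w : H := v k - p with hwdef
  have hwsub : v k - w ∈ V := by
    rw [hwdef, sub_sub_cancel]; exact (V.orthogonalProjectionOnto (v k)).2
  have hwperp : ∀ m : Fin d, (inner ℝ w (v (k.succAbove m)) : ℝ) = 0 := by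
    intro m
    exact (Submodule.mem_orthogonal' V w).1
      (Submodule.sub_starProjection_mem_orthogonal (K := V) (v k)) _
      (Submodule.subset_span ⟨m, rfl⟩)
  -- the key factorization
  have key : simplexContent (d + 1) X = ‖w‖ * simplexContent d (X ∘ i.succAbove) := by
    have h1 : simplexContent (d + 1) X =
        Real.sqrt (Matrix.det (Matrix.of fun a b : Fin (d + 1) =>
          (inner ℝ (v a) (v b) : ℝ))) := rfl
    have hmat : (Matrix.of fun a b : Fin d =>
        (inner ℝ ((X ∘ i.succAbove) a.succ - (X ∘ i.succAbove) 0)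
          ((X ∘ i.succAbove) b.succ - (X ∘ i.succAbove) 0) : ℝ)) =
        Matrix.of fun a b : Fin d =>
          (inner ℝ (v (k.succAbove a)) (v (k.succAbove b)) : ℝ) := by
      ext a b
      simp only [Matrix.of_apply, Function.comp_apply, hsa0, hvsa]
    have h2 : simplexContent d (X ∘ i.succAbove) =
        Real.sqrt (Matrix.det (Matrix.of fun a b : Fin d =>
          (inner ℝ (v (k.succAbove a)) (v (k.succAbove b)) : ℝ))) := by
      unfold simplexContent
      rw [hmat]
    rw [h1, h2, gram_det_factor v k w hwsub hwperp, Real.sqrt_mul (sq_nonneg _),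
      Real.sqrt_sq (norm_nonneg _)]
  -- membership facts for the affine span
  have hX0mem : X 0 ∈ Set.range (X ∘ i.succAbove) := ⟨0, by simp [hsa0]⟩
  have hX0S : X 0 ∈ affineSpan ℝ (Set.range (X ∘ i.succAbove)) :=
    subset_affineSpan ℝ _ hX0mem
  -- distance bound
  have hinf : Metric.infDist (X i)
      ((affineSpan ℝ (Set.range (X ∘ i.succAbove)) : AffineSubspace ℝ H) : Set H) ≤ ‖w‖ := by
    have hpdir : p ∈ (affineSpan ℝ (Set.range (X ∘ i.succAbove))).direction := by
      rw [direction_affineSpan]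
      have hVle : V ≤ vectorSpan ℝ (Set.range (X ∘ i.succAbove)) := by
        rw [hV, Submodule.span_le]
        rintro _ ⟨a, rfl⟩
        have h1 : X (i.succAbove a.succ) ∈ Set.range (X ∘ i.succAbove) := ⟨a.succ, rfl⟩
        have := vsub_mem_vectorSpan ℝ h1 hX0mem
        simpa [Function.comp_apply, hvsa a] using this
      exact hVle (V.orthogonalProjectionOnto (v k)).2
    have hq : p +ᵥ X 0 ∈ affineSpan ℝ (Set.range (X ∘ i.succAbove)) :=
      AffineSubspace.vadd_mem_of_mem_direction hpdir hX0S
    have hvk : v k = X i - X 0 := by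
      rw [show v k = X k.succ - X 0 from rfl, hk]
    have hdist : dist (X i) (p +ᵥ X 0) = ‖w‖ := by
      rw [dist_eq_norm, hwdef, hvk, vadd_eq_add]
      congr 1
      abel
    calc Metric.infDist (X i) _ ≤ dist (X i) (p +ᵥ X 0) :=
          Metric.infDist_le_dist_of_mem hq
      _ = ‖w‖ := hdist
  -- nondegeneracy off the removed vertex
  have hne : ∀ j : Fin (d + 2), j ≠ 0 → j ≠ i → X j ≠ X 0 := by
    intro j hj0 hji hXj
    obtain ⟨m, rfl⟩ := Fin.exists_succAbove_eq hji
    have hm0 : m ≠ 0 := by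
      intro h; rw [h, hsa0] at hj0; exact hj0 rfl
    obtain ⟨m', rfl⟩ : ∃ m' : Fin d, m'.succ = m := by
      rcases m.eq_succ_of_ne_zero hm0 with ⟨m', rfl⟩; exact ⟨m', rfl⟩
    have hzero : simplexContent d (X ∘ i.succAbove) = 0 := by
      unfold simplexContent
      rw [Matrix.det_eq_zero_of_row_eq_zero m' (fun b => by
        simp [Function.comp_apply, hXj, hsa0])]
      exact Real.sqrt_zero
    rw [hzero] at hMbasepos
    exact lt_irrefl 0 hMbasepos
  by_cases hXi : X i = X 0
  · have hinf0 : Metric.infDist (X i)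
        ((affineSpan ℝ (Set.range (X ∘ i.succAbove)) : AffineSubspace ℝ H) : Set H) = 0 :=
      Metric.infDist_zero_of_mem (by rw [hXi]; exact hX0S)
    rw [hinf0, zero_div, mul_zero]
    exact div_nonneg (Real.sqrt_nonneg _) (Finset.prod_nonneg fun _ _ => dist_nonneg)
  · set P := ∏ j ∈ Finset.univ.erase (0 : Fin (d + 2)), dist (X j) (X 0) with hP
    have hPpos : 0 < P := by
      rw [hP]
      apply Finset.prod_pos
      intro j hj
      rw [dist_pos]
      rcases eq_or_ne j i with rfl | hji
      · exact hXi
      · exact hne j (Finset.ne_of_mem_erase hj) hji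
    have hcard : (Finset.univ.erase (0 : Fin (d + 2))).card = d + 1 := by
      rw [Finset.card_erase_of_mem (Finset.mem_univ _), Finset.card_univ, Fintype.card_fin]
      omega
    have hPle : P ≤ (2 * t) ^ (d + 1) := by
      calc P ≤ ∏ _j ∈ Finset.univ.erase (0 : Fin (d + 2)), (2 * t) := by
              apply Finset.prod_le_prod (fun j _ => dist_nonneg)
              intro j _
              calc dist (X j) (X 0) ≤ dist (X j) x + dist (X 0) x := dist_triangle_right _ _ _
                _ ≤ t + t := add_le_add (mem_closedBall.1 (hX j)) (mem_closedBall.1 (hX 0))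
                _ = 2 * t := by ring
        _ = (2 * t) ^ (d + 1) := by rw [Finset.prod_const, hcard]
    have h2t : (0 : ℝ) < 2 * t := by linarith
    calc ω / 2 ^ (d + 1) * (Metric.infDist (X i)
            ((affineSpan ℝ (Set.range (X ∘ i.succAbove)) : AffineSubspace ℝ H) : Set H) / t)
        ≤ ω / 2 ^ (d + 1) * (‖w‖ / t) :=
          mul_le_mul_of_nonneg_left ((div_le_div_iff_of_pos_right ht).2 hinf) (by positivity)
      _ = ω * t ^ d * ‖w‖ / (2 * t) ^ (d + 1) := by
          rw [mul_pow]
          field_simp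
          ring
      _ ≤ simplexContent d (X ∘ i.succAbove) * ‖w‖ / P :=
          div_le_div₀ (mul_nonneg hMbasepos.le (norm_nonneg _))
            (mul_le_mul_of_nonneg_right hcont (norm_nonneg _)) hPpos hPle
      _ = polarSin X 0 := by
          rw [polarSin, key, ← hP, mul_comm]
end
end

section
/- If X ∈ H^{d+2} with diam(X) > 0 is d-separated for ω > 0, i.e., min_{0≤i≤d+1} M_d(X(i)) ≥ ω · diam(X)^d, then X is 1-separated for ω, i.e., min(X)/diam(X) ≥ ω, where min(X) and diam(X) are the smallest and largest pairwise distances among the coordinates of X. -/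
open Metric Finset

noncomputable section

/-- The largest pairwise distance among the coordinates of X. -/
def tdiam {H : Type*} [PseudoMetricSpace H] {n : ℕ} (X : Fin n → H) : ℝ :=
  Metric.diam (Set.range X)

section Aux

variable {H : Type*} [NormedAddCommGroup H] [InnerProductSpace ℝ H]

def gram {n : ℕ} (v : Fin n → H) : Matrix (Fin n) (Fin n) ℝ :=
  Matrix.of fun i j => (inner ℝ (v i) (v j) : ℝ)

lemma gram_posSemidef {n : ℕ} (v : Fin n → H) : (gram v).PosSemidef := by
  rw [Matrix.posSemidef_iff_dotProduct_mulVec]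
  constructor
  · ext i j
    simp [gram, Matrix.conjTranspose_apply, real_inner_comm]
  · intro x
    have h : dotProduct (star x) ((gram v).mulVec x)
        = (inner ℝ (∑ i, x i • v i) (∑ j, x j • v j) : ℝ) := by
      simp only [dotProduct, Matrix.mulVec, gram, Matrix.of_apply,
        sum_inner, inner_sum, real_inner_smul_left, real_inner_smul_right, star_trivial]
      congr 1; ext i; rw [Finset.mul_sum]; congr 1; ext j; rw [real_inner_comm (v j)]; ring
    rw [h]
    exact real_inner_self_nonneg

lemma trace_gram_eq {n : ℕ} (v : Fin n → H) (hv : ∀ i, ‖v i‖ = 1) :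
    (gram v).trace = n := by
  simp [Matrix.trace, Matrix.diag, gram, real_inner_self_eq_norm_sq, hv]

lemma trace_eq_sum_eigenvalues {n : ℕ} {A : Matrix (Fin n) (Fin n) ℝ} (hA : A.IsHermitian) :
    A.trace = ∑ i, hA.eigenvalues i := by
  simpa using hA.trace_eq_sum_eigenvalues

lemma det_gram_le_one {n : ℕ} (v : Fin n → H) (hv : ∀ i, ‖v i‖ = 1) :
    (gram v).det ≤ 1 := by
  rcases Nat.eq_zero_or_pos n with hn | hn
  · subst hn; simp [Matrix.det_isEmpty]
  have hps := gram_posSemidef v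
  have hH := hps.isHermitian
  set lam := hH.eigenvalues with hlam
  have hdet : (gram v).det = ∏ i, lam i := by
    have := hH.det_eq_prod_eigenvalues
    simpa using this
  have hnonneg : ∀ i, 0 ≤ lam i := hps.eigenvalues_nonneg
  have hsum : ∑ i, lam i = n := by
    rw [← trace_eq_sum_eigenvalues hH, trace_gram_eq v hv]
  have hAM := Real.geom_mean_le_arith_mean_weighted Finset.univ
      (fun _ => (n : ℝ)⁻¹) lam (fun _ _ => by positivity)
      (by simp [Finset.sum_const, Fintype.card_fin]; field_simp)
      (fun i _ => hnonneg i)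
  have hn' : (n : ℝ) ≠ 0 := by positivity
  have hrhs : ∑ i, (n : ℝ)⁻¹ * lam i = 1 := by
    rw [← Finset.mul_sum, hsum]; field_simp
  have hlhs : ∏ i, lam i ^ ((n : ℝ)⁻¹) = (∏ i, lam i) ^ ((n : ℝ)⁻¹) := by
    rw [← Real.finset_prod_rpow _ _ (fun i _ => hnonneg i)]
  have hprodnn : 0 ≤ ∏ i, lam i := Finset.prod_nonneg fun i _ => hnonneg i
  have key : (∏ i, lam i) ^ ((n : ℝ)⁻¹) ≤ 1 := by
    rw [← hlhs]; calc ∏ i, lam i ^ ((n : ℝ)⁻¹) ≤ ∑ i, (n : ℝ)⁻¹ * lam i := hAM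
      _ = 1 := hrhs
  have := Real.rpow_le_rpow (Real.rpow_nonneg hprodnn _) key (le_of_lt (by positivity : (0:ℝ) < n))
  rw [← Real.rpow_mul hprodnn, inv_mul_cancel₀ hn', Real.rpow_one, Real.one_rpow] at this
  rw [hdet]
  exact this

lemma det_gram_le {n : ℕ} (v : Fin n → H) :
    (gram v).det ≤ ∏ i, ‖v i‖ ^ 2 := by
  by_cases hz : ∃ i, v i = 0
  · obtain ⟨i, hi⟩ := hz
    have : (gram v).det = 0 := by
      apply Matrix.det_eq_zero_of_row_eq_zero i
      intro j; simp [gram, hi]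
    rw [this]
    exact Finset.prod_nonneg fun j _ => by positivity
  push_neg at hz
  set u : Fin n → H := fun i => ‖v i‖⁻¹ • v i with hu
  have hnorm : ∀ i, ‖v i‖ ≠ 0 := fun i => norm_ne_zero_iff.mpr (hz i)
  have hun : ∀ i, ‖u i‖ = 1 := by
    intro i; rw [hu]; simp [norm_smul, abs_of_nonneg (inv_nonneg.mpr (norm_nonneg _)),
      inv_mul_cancel₀ (hnorm i)]
  have hfact : gram v = (Matrix.diagonal fun i => ‖v i‖) * gram u *
      (Matrix.diagonal fun i => ‖v i‖) := by
    ext i j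
    simp only [Matrix.diagonal_mul, Matrix.mul_diagonal, gram, Matrix.of_apply, hu,
      real_inner_smul_left, real_inner_smul_right]
    field_simp
    rw [eq_div_iff (mul_ne_zero (hnorm i) (hnorm j))]; ring
  have := det_gram_le_one u hun
  calc (gram v).det = (∏ i, ‖v i‖) * (gram u).det * (∏ i, ‖v i‖) := by
        rw [hfact, Matrix.det_mul, Matrix.det_mul, Matrix.det_diagonal]
      _ ≤ (∏ i, ‖v i‖) * 1 * (∏ i, ‖v i‖) := by
        have h1 : 0 ≤ ∏ i, ‖v i‖ := Finset.prod_nonneg fun i _ => norm_nonneg _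
        have h2 : (gram u).det ≤ 1 := this
        have h3 := mul_le_mul_of_nonneg_left h2 (mul_nonneg h1 h1)
        nlinarith [h3]
      _ = ∏ i, ‖v i‖ ^ 2 := by rw [mul_one, ← Finset.prod_mul_distrib]; congr 1; ext i; ring

lemma det_gram_update_sub {n : ℕ} (v : Fin n → H) {a b : Fin n} (hab : a ≠ b) :
    (gram (Function.update v a (v a - v b))).det = (gram v).det := by
  classical
  set G := gram v with hG
  set R := Matrix.updateRow G a (G a + (-1 : ℝ) • G b) with hR
  have h1 : R.det = G.det := Matrix.det_updateRow_add_smul_self G hab (-1)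
  have h2 : (Matrix.updateCol R a fun k => R k a + (-1 : ℝ) • R k b).det = R.det :=
    Matrix.det_updateCol_add_smul_self R hab (-1)
  have h3 : gram (Function.update v a (v a - v b)) =
      Matrix.updateCol R a fun k => R k a + (-1 : ℝ) • R k b := by
    ext i j
    simp only [gram, Matrix.of_apply, hR, hG, Matrix.updateCol_apply,
      Matrix.updateRow_apply, Function.update_apply, Pi.add_apply, Pi.smul_apply,
      smul_eq_mul, inner_sub_left, inner_sub_right]
    split_ifs <;> simp_all [inner_sub_left, inner_sub_right, norm_sub_sq_real, real_inner_comm] <;> ring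
  rw [h3, h2, h1]

lemma sqrt_det_gram_le {n : ℕ} (u : Fin n → H) (t : Fin n) {m M : ℝ} (hM0 : 0 ≤ M)
    (hm0 : 0 ≤ m) (ht : ‖u t‖ ≤ m) (hs : ∀ s, s ≠ t → ‖u s‖ ≤ M) :
    Real.sqrt (gram u).det ≤ m * M ^ (n - 1) := by
  have h1 : (gram u).det ≤ ∏ i, ‖u i‖ ^ 2 := det_gram_le u
  have h2 : ∏ i, ‖u i‖ ^ 2 = ‖u t‖ ^ 2 * ∏ i ∈ Finset.univ.erase t, ‖u i‖ ^ 2 :=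
    (Finset.mul_prod_erase Finset.univ _ (Finset.mem_univ t)).symm
  have h3 : ∏ i ∈ Finset.univ.erase t, ‖u i‖ ^ 2 ≤ ∏ i ∈ Finset.univ.erase t, M ^ 2 := by
    apply Finset.prod_le_prod (fun i _ => by positivity)
    intro i hi
    have := hs i (Finset.ne_of_mem_erase hi)
    have h0 : (0:ℝ) ≤ ‖u i‖ := norm_nonneg _
    nlinarith [this, h0]
  have hcard : (Finset.univ.erase t).card = n - 1 := by
    rw [Finset.card_erase_of_mem (Finset.mem_univ t), Finset.card_univ, Fintype.card_fin]
  have h4 : (gram u).det ≤ m ^ 2 * (M ^ 2) ^ (n - 1) := by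
    calc (gram u).det ≤ ∏ i, ‖u i‖ ^ 2 := h1
      _ = ‖u t‖ ^ 2 * ∏ i ∈ Finset.univ.erase t, ‖u i‖ ^ 2 := h2
      _ ≤ m ^ 2 * (M ^ 2) ^ (n - 1) := by
          rw [← hcard, ← Finset.prod_const]
          have hb := h3
          rw [Finset.prod_const, hcard] at hb ⊢
          have hnt : (0:ℝ) ≤ ‖u t‖ := norm_nonneg _
          have h5 : ‖u t‖ ^ 2 ≤ m ^ 2 := by nlinarith
          have h6 : (0:ℝ) ≤ ∏ i ∈ Finset.univ.erase t, ‖u i‖ ^ 2 :=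
            Finset.prod_nonneg fun i _ => by positivity
          nlinarith [h5, h6, hb, sq_nonneg m]
  calc Real.sqrt (gram u).det ≤ Real.sqrt (m ^ 2 * (M ^ 2) ^ (n - 1)) := Real.sqrt_le_sqrt h4
    _ = m * M ^ (n - 1) := by
        rw [show m ^ 2 * (M ^ 2) ^ (n-1) = (m * M ^ (n-1)) ^ 2 by ring]
        exact Real.sqrt_sq (by positivity)
lemma simplexContent_le_of_pair {d : ℕ} (y : Fin (d + 1) → H) {m M : ℝ} (hM0 : 0 ≤ M)
    (hm0 : 0 ≤ m) (hdist : ∀ s t, dist (y s) (y t) ≤ M)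
    {a b : Fin (d + 1)} (hab : a ≠ b) (hm : dist (y a) (y b) ≤ m) :
    simplexContent d y ≤ m * M ^ (d - 1) := by
  set u : Fin d → H := fun s => y s.succ - y 0 with hu
  have hsc : simplexContent d y = Real.sqrt (gram u).det := rfl
  have hub : ∀ s : Fin d, ‖u s‖ ≤ M := by
    intro s
    rw [hu]
    simp only [← dist_eq_norm]
    exact hdist _ _
  rw [hsc]
  rcases eq_or_ne a 0 with rfl | ha0
  · have hb0 : b ≠ 0 := fun h => hab (h ▸ rfl)
    refine sqrt_det_gram_le u (b.pred hb0) hM0 hm0 ?_ (fun s _ => hub s)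
    have : u (b.pred hb0) = y b - y 0 := by rw [hu]; simp [Fin.succ_pred]
    rw [this, ← dist_eq_norm, dist_comm]
    exact hm
  · rcases eq_or_ne b 0 with rfl | hb0
    · refine sqrt_det_gram_le u (a.pred ha0) hM0 hm0 ?_ (fun s _ => hub s)
      have : u (a.pred ha0) = y a - y 0 := by rw [hu]; simp [Fin.succ_pred]
      rw [this, ← dist_eq_norm]
      exact hm
    · set ta := a.pred ha0
      set tb := b.pred hb0
      have htab : ta ≠ tb := by
        intro h
        apply hab
        have := congrArg Fin.succ h
        rwa [Fin.succ_pred, Fin.succ_pred] at this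
      have hdet : (gram (Function.update u ta (u ta - u tb))).det = (gram u).det :=
        det_gram_update_sub u htab
      rw [← hdet]
      refine sqrt_det_gram_le _ ta hM0 hm0 ?_ ?_
      · have h1 : Function.update u ta (u ta - u tb) ta = u ta - u tb :=
          Function.update_self _ _ _
        have h2 : u ta - u tb = y a - y b := by
          rw [hu]; simp only [Fin.succ_pred, ta, tb]; abel
        rw [h1, h2, ← dist_eq_norm]
        exact hm
      · intro s hs
        rw [Function.update_of_ne hs]
        exact hub s

end Aux

/-- If X is d-separated for ω (all faces X(i) satisfy M_d(X(i)) ≥ ω·diam(X)^d), then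
X is 1-separated for ω: min(X)/diam(X) ≥ ω. -/
theorem d_separated_implies_one_separated {H : Type*} [NormedAddCommGroup H]
    [InnerProductSpace ℝ H] (d : ℕ) (hd : 1 ≤ d) (X : Fin (d + 2) → H)
    (ω : ℝ) (hω : 0 < ω) (hdiam : 0 < tdiam X)
    (hsep : ∀ i : Fin (d + 2), ω * tdiam X ^ d ≤ simplexContent d (X ∘ i.succAbove)) :
    ω ≤ tmin X / tdiam X := by
  -- the set of pairwise distances
  set S : Set ℝ := {r | ∃ i j, i ≠ j ∧ r = dist (X i) (X j)} with hSdef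
  have hSfin : S.Finite := by
    apply Set.Finite.subset
      (Set.finite_range fun p : Fin (d + 2) × Fin (d + 2) => dist (X p.1) (X p.2))
    rintro r ⟨i, j, -, rfl⟩
    exact ⟨(i, j), rfl⟩
  have h01 : (0 : Fin (d + 2)) ≠ 1 := by
    intro h
    have := congrArg Fin.val h
    simp [Fin.val_one] at this
  have hSne : S.Nonempty := ⟨dist (X 0) (X 1), 0, 1, h01, rfl⟩
  obtain ⟨i, j, hij, hmin⟩ : tmin X ∈ S := hSne.csInf_mem hSfin
  have hbd : ∀ s t : Fin (d + 2), dist (X s) (X t) ≤ tdiam X := fun s t =>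
    dist_le_diam_of_mem ((Set.finite_range X).isBounded) ⟨s, rfl⟩ ⟨t, rfl⟩
  -- pick k distinct from i and j
  obtain ⟨k, hkmem⟩ : (({i, j} : Finset (Fin (d + 2)))ᶜ).Nonempty := by
    rw [← Finset.card_pos, Finset.card_compl]
    have h2 : ({i, j} : Finset (Fin (d + 2))).card ≤ 2 :=
      (Finset.card_insert_le _ _).trans (by simp)
    simp only [Fintype.card_fin]
    omega
  have hk := Finset.mem_compl.mp hkmem
  simp only [Finset.mem_insert, Finset.mem_singleton, not_or] at hk
  obtain ⟨hki, hkj⟩ := hk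
  obtain ⟨a, ha⟩ := Fin.exists_succAbove_eq (Ne.symm hki)
  obtain ⟨b, hb⟩ := Fin.exists_succAbove_eq (Ne.symm hkj)
  have hab : a ≠ b := by
    intro h; apply hij; rw [← ha, ← hb, h]
  have htmin0 : 0 ≤ tmin X := hmin ▸ dist_nonneg
  have hface : simplexContent d (X ∘ k.succAbove) ≤ tmin X * tdiam X ^ (d - 1) := by
    have := simplexContent_le_of_pair (X ∘ k.succAbove) (M := tdiam X) (m := tmin X)
      hdiam.le htmin0 (fun s t => hbd _ _) hab
      (by simp only [Function.comp_apply, ha, hb]; exact le_of_eq hmin.symm)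
    exact this
  have hchain : ω * tdiam X ^ d ≤ tmin X * tdiam X ^ (d - 1) := (hsep k).trans hface
  rw [le_div_iff₀ hdiam]
  have hpow : (0 : ℝ) < tdiam X ^ (d - 1) := pow_pos hdiam _
  have hdd : tdiam X ^ d = tdiam X ^ (d - 1) * tdiam X := by
    rw [← pow_succ]
    congr 1
    omega
  have : ω * tdiam X * tdiam X ^ (d - 1) ≤ tmin X * tdiam X ^ (d - 1) := by
    calc ω * tdiam X * tdiam X ^ (d - 1) = ω * tdiam X ^ d := by rw [hdd]; ring
      _ ≤ tmin X * tdiam X ^ (d - 1) := hchain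
  exact le_of_mul_le_mul_right this hpow
end
end

section
/- Let μ be a d-regular measure on a Hilbert space H with regularity constant C_μ, let 1 ≤ m < d be an integer, 0 ≤ ε ≤ 1, and L an m-dimensional affine subspace of H. Then for all x ∈ supp(μ) ∩ L and 0 < t ≤ diam(supp(μ)), μ(Tube(L, ε·t) ∩ B(x,t)) ≤ 2^{m + 3d/2} · C_μ · ε^{d−m} · t^d, where Tube(L, η) = {y ∈ H : dist(y, L) ≤ η}. -/
open MeasureTheory Metric

/-- The (closed) support of a measure. -/
def msupport {H : Type*} [MetricSpace H] [MeasurableSpace H] (μ : Measure H) : Set H :=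
  {x | ∀ r : ℝ, 0 < r → 0 < μ (closedBall x r)}

/-- μ is d-regular with regularity constant Cμ. -/
def IsDRegular {H : Type*} [MetricSpace H] [MeasurableSpace H] (d : ℕ) (Cμ : ℝ)
    (μ : Measure H) : Prop :=
  1 ≤ Cμ ∧ ∀ x ∈ msupport μ, ∀ t : ℝ, 0 < t →
    ENNReal.ofReal t ≤ EMetric.diam (msupport μ) →
      ENNReal.ofReal (Cμ⁻¹ * t ^ d) ≤ μ (closedBall x t) ∧
        μ (closedBall x t) ≤ ENNReal.ofReal (Cμ * t ^ d)

lemma msupport_compl_null {H : Type*} [MetricSpace H] [SecondCountableTopology H]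
    [MeasurableSpace H] (μ : Measure H) : μ (msupport μ)ᶜ = 0 := by
  classical
  have hex : ∀ x ∈ (msupport μ)ᶜ, ∃ r : ℝ, 0 < r ∧ μ (closedBall x r) = 0 := by
    intro x hx
    simp only [Set.mem_compl_iff, msupport, Set.mem_setOf_eq] at hx
    push_neg at hx
    obtain ⟨r, hr, h⟩ := hx
    exact ⟨r, hr, le_antisymm h zero_le⟩
  set f : H → Set H := fun x =>
    if h : x ∈ (msupport μ)ᶜ then ball x (hex x h).choose else ∅ with hf
  obtain ⟨c, hc_sub, hc_cnt, hc_cov⟩ :=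
    TopologicalSpace.countable_cover_nhdsWithin (f := f) (s := (msupport μ)ᶜ)
      (by
        intro x hx
        refine mem_nhdsWithin_of_mem_nhds ?_
        rw [hf]; simp only [hx, dif_pos]
        exact ball_mem_nhds x (hex x hx).choose_spec.1)
  refine measure_mono_null hc_cov ?_
  rw [measure_biUnion_null_iff hc_cnt]
  intro x hxc
  have hx := hc_sub hxc
  have : f x = ball x (hex x hx).choose := by rw [hf]; simp [hx]
  rw [this]
  exact measure_mono_null ball_subset_closedBall (hex x hx).choose_spec.2

lemma measure_closedBall_le_of_dreg {H : Type*} [MetricSpace H] [SecondCountableTopology H]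
    [MeasurableSpace H] {d : ℕ} {Cμ : ℝ} {μ : Measure H} (hreg : IsDRegular d Cμ μ)
    {t : ℝ} (ht : 0 < t) (htd : ENNReal.ofReal t ≤ EMetric.diam (msupport μ))
    {q : H} (hq : q ∈ msupport μ) {s : ℝ} (hs : 0 < s) :
    μ (closedBall q s) ≤ ENNReal.ofReal (Cμ * s ^ d) := by
  have hC1 := hreg.1
  by_cases hcase : ENNReal.ofReal s ≤ EMetric.diam (msupport μ)
  · exact (hreg.2 q hq s hs hcase).2
  push_neg at hcase
  have hfin : EMetric.diam (msupport μ) ≠ ⊤ := hcase.ne_top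
  set D := (EMetric.diam (msupport μ)).toReal with hD
  have hDdiam : ENNReal.ofReal D = EMetric.diam (msupport μ) := by
    rw [hD, ENNReal.ofReal_toReal hfin]
  have htD : t ≤ D := by
    rw [← hDdiam] at htd
    exact (ENNReal.ofReal_le_ofReal_iff ENNReal.toReal_nonneg).1 htd
  have hD0 : 0 < D := lt_of_lt_of_le ht htD
  have hDs : D ≤ s := by
    have := (ENNReal.lt_ofReal_iff_toReal_lt hfin).1 hcase
    linarith
  have hsub : closedBall q s ⊆ closedBall q D ∪ (msupport μ)ᶜ := by
    intro z _
    by_cases hz : z ∈ msupport μ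
    · left
      have hed : edist z q ≤ EMetric.diam (msupport μ) := EMetric.edist_le_diam_of_mem hz hq
      have : dist z q ≤ D := by
        rw [dist_edist, hD]
        exact ENNReal.toReal_mono hfin hed
      exact mem_closedBall.2 this
    · right; exact hz
  calc μ (closedBall q s) ≤ μ (closedBall q D) + μ (msupport μ)ᶜ :=
        le_trans (measure_mono hsub) (measure_union_le (μ := μ) _ _)
    _ = μ (closedBall q D) := by rw [msupport_compl_null, add_zero]
    _ ≤ ENNReal.ofReal (Cμ * D ^ d) := (hreg.2 q hq D hD0 hDdiam.le).2
    _ ≤ ENNReal.ofReal (Cμ * s ^ d) := by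
        apply ENNReal.ofReal_le_ofReal
        have : D ^ d ≤ s ^ d := pow_le_pow_left₀ hD0.le hDs d
        nlinarith

lemma packing_aux {n : ℕ} (hn : 0 < n) (Y : Finset (EuclideanSpace ℝ (Fin n))) {R ρ : ℝ}
    (hρ : 0 < ρ) (hR0 : 0 ≤ R) (hR : ∀ y ∈ Y, ‖y‖ ≤ R)
    (hsep : ∀ y ∈ Y, ∀ z ∈ Y, y ≠ z → 2 * ρ ≤ dist y z) :
    (Y.card : ℝ) * ρ ^ n ≤ (R + ρ) ^ n := by
  haveI : Nonempty (Fin n) := ⟨⟨0, hn⟩⟩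
  haveI : Nontrivial (EuclideanSpace ℝ (Fin n)) := inferInstance
  set v1 := volume (ball (0 : EuclideanSpace ℝ (Fin n)) 1) with hv1
  have hv1pos : v1 ≠ 0 := (measure_ball_pos volume _ one_pos).ne'
  have hv1top : v1 ≠ ⊤ := measure_ball_lt_top.ne
  have hdisj : (↑Y : Set (EuclideanSpace ℝ (Fin n))).PairwiseDisjoint (fun y => ball y ρ) := by
    intro a ha b hb hab
    exact ball_disjoint_ball (by linarith [hsep a ha b hb hab])
  have hsum : volume (⋃ y ∈ Y, ball y ρ) = ∑ y ∈ Y, volume (ball y ρ) :=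
    measure_biUnion_finset hdisj (fun b _ => measurableSet_ball)
  have hball : ∀ y : EuclideanSpace ℝ (Fin n),
      volume (ball y ρ) = ENNReal.ofReal (ρ ^ n) * v1 := by
    intro y
    rw [hv1, Measure.addHaar_ball volume y hρ.le, finrank_euclideanSpace_fin]
  have hincl : (⋃ y ∈ Y, ball y ρ) ⊆ ball 0 (R + ρ) := by
    intro z hz
    simp only [Set.mem_iUnion] at hz
    obtain ⟨y, hy, hzy⟩ := hz
    rw [mem_ball] at hzy ⊢
    calc dist z 0 ≤ dist z y + dist y 0 := dist_triangle _ _ _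
      _ < ρ + R := by
          have : dist y 0 ≤ R := by rw [dist_zero_right]; exact hR y hy
          linarith
      _ = R + ρ := by ring
  have hbig : volume (ball (0 : EuclideanSpace ℝ (Fin n)) (R + ρ)) =
      ENNReal.ofReal ((R + ρ) ^ n) * v1 := by
    rw [hv1, Measure.addHaar_ball volume 0 (by linarith : (0:ℝ) ≤ R + ρ),
      finrank_euclideanSpace_fin]
  have key : (Y.card : ENNReal) * (ENNReal.ofReal (ρ ^ n) * v1) ≤
      ENNReal.ofReal ((R + ρ) ^ n) * v1 := by
    calc (Y.card : ENNReal) * (ENNReal.ofReal (ρ ^ n) * v1)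
        = ∑ y ∈ Y, volume (ball y ρ) := by
          rw [Finset.sum_congr rfl (fun y _ => hball y), Finset.sum_const, nsmul_eq_mul]
      _ = volume (⋃ y ∈ Y, ball y ρ) := hsum.symm
      _ ≤ volume (ball (0 : EuclideanSpace ℝ (Fin n)) (R + ρ)) := measure_mono hincl
      _ = ENNReal.ofReal ((R + ρ) ^ n) * v1 := hbig
  rw [← mul_assoc, ENNReal.mul_le_mul_iff_left hv1pos hv1top] at key
  have key2 : ENNReal.ofReal ((Y.card : ℝ) * ρ ^ n) ≤ ENNReal.ofReal ((R + ρ) ^ n) := by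
    rwa [ENNReal.ofReal_mul (by positivity), ENNReal.ofReal_natCast]
  exact (ENNReal.ofReal_le_ofReal_iff (by positivity)).1 key2

set_option maxHeartbeats 1000000 in
lemma tube_bound_pos {H : Type*} [NormedAddCommGroup H] [InnerProductSpace ℝ H]
    [CompleteSpace H] [SecondCountableTopology H] [MeasurableSpace H] [BorelSpace H]
    (d : ℕ) (Cμ : ℝ) (μ : Measure H) (hreg : IsDRegular d Cμ μ)
    (m : ℕ) (hm1 : 1 ≤ m) (hmd : m < d) (ε : ℝ) (hε0 : 0 < ε) (hε1 : ε ≤ 1)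
    (L : AffineSubspace ℝ H) (hL : Module.finrank ℝ L.direction = m)
    (x : H) (hx : x ∈ msupport μ) (hxL : x ∈ L)
    (t : ℝ) (ht : 0 < t) (htd : ENNReal.ofReal t ≤ EMetric.diam (msupport μ)) :
    μ ({y | Metric.infDist y (L : Set H) ≤ ε * t} ∩ closedBall x t) ≤
      ENNReal.ofReal ((2 : ℝ) ^ ((m : ℝ) + 3 * (d : ℝ) / 2) * Cμ * ε ^ (d - m) * t ^ d) := by
  classical
  obtain ⟨hC1, hub⟩ := hreg
  have hC0 : (0:ℝ) < Cμ := zero_lt_one.trans_le hC1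
  set r := ε * t with hr
  have hr0 : 0 < r := mul_pos hε0 ht
  set A := {y | Metric.infDist y (L : Set H) ≤ r} ∩ closedBall x t with hA
  set K := (2:ℝ) ^ ((m:ℝ) + 3 * (d:ℝ) / 2) with hK
  have hKpos : 0 < K := Real.rpow_pos_of_pos two_pos _
  have hs2 : (0:ℝ) < Real.sqrt 2 := Real.sqrt_pos.2 two_pos
  have hKexp : K = 2 ^ m * (2 * Real.sqrt 2) ^ d := by
    have h32 : (2:ℝ) * Real.sqrt 2 = 2 ^ ((3:ℝ)/2) := by
      have h3 : (3:ℝ)/2 = 1 + 1/2 := by norm_num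
      rw [Real.sqrt_eq_rpow, h3, Real.rpow_add two_pos, Real.rpow_one]
    rw [hK, h32, ← Real.rpow_natCast ((2:ℝ) ^ ((3:ℝ)/2)) d, ← Real.rpow_mul two_pos.le,
        ← Real.rpow_natCast (2:ℝ) m, ← Real.rpow_add two_pos]
    congr 1
    ring
  by_cases hhalf : 1/2 < ε
  · -- trivial case
    have h2 : μ A ≤ ENNReal.ofReal (Cμ * t ^ d) :=
      (measure_mono Set.inter_subset_right).trans (hub x hx t ht htd).2
    refine h2.trans (ENNReal.ofReal_le_ofReal ?_)
    have hεp : ((2:ℝ)⁻¹) ^ (d-m) ≤ ε ^ (d-m) := pow_le_pow_left₀ (by norm_num) (by linarith) _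
    have hKge : (2:ℝ) ^ (d-m) ≤ K := by
      rw [hK, ← Real.rpow_natCast (2:ℝ) (d-m)]
      apply Real.rpow_le_rpow_of_exponent_le one_le_two
      have h1 : ((d-m : ℕ):ℝ) ≤ (d:ℝ) := by exact_mod_cast Nat.sub_le d m
      have hm0 : (0:ℝ) ≤ m := Nat.cast_nonneg m
      have hd0 : (0:ℝ) ≤ d := Nat.cast_nonneg d
      linarith
    have h1 : (1:ℝ) ≤ K * ε ^ (d-m) := by
      have h0 : (1:ℝ) = 2 ^ (d-m) * (2⁻¹) ^ (d-m) := by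
        rw [← mul_pow]; norm_num
      rw [h0]
      exact mul_le_mul hKge hεp (by positivity) hKpos.le
    calc Cμ * t ^ d = 1 * (Cμ * t ^ d) := by ring
      _ ≤ (K * ε ^ (d-m)) * (Cμ * t ^ d) := by
          apply mul_le_mul_of_nonneg_right h1 (by positivity)
      _ = K * Cμ * ε ^ (d-m) * t ^ d := by ring
  push_neg at hhalf
  -- main case : ε ≤ 1/2
  set s0 := 2 * Real.sqrt 2 * r with hs0
  have hs00 : 0 < s0 := by positivity
  set V := L.direction with hV
  haveI : FiniteDimensional ℝ V := FiniteDimensional.of_finrank_pos (by rw [hL]; exact hm1)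
  set pr : H → H := fun y => ((V.orthogonalProjectionOnto (y - x) : V) : H) with hpr
  have hprV : ∀ y, pr y ∈ V := fun y => SetLike.coe_mem _
  have hworth : ∀ y : H, (y - x) - pr y ∈ Vᗮ := fun y =>
    Submodule.sub_starProjection_mem_orthogonal (K := V) (y - x)
  have pyth : ∀ a b : H, a ∈ V → b ∈ Vᗮ → ‖a + b‖^2 = ‖a‖^2 + ‖b‖^2 := by
    intro a b ha hb
    rw [norm_add_sq_real, Submodule.inner_right_of_mem_orthogonal ha hb]; ring
  have hLne : (L : Set H).Nonempty := ⟨x, hxL⟩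
  have hwle : ∀ y : H, Metric.infDist y (L : Set H) ≤ r → ‖(y - x) - pr y‖ ≤ r := by
    intro y hy
    refine le_trans ?_ hy
    by_contra hcon
    push_neg at hcon
    obtain ⟨p, hpL, hdp⟩ := (Metric.infDist_lt_iff hLne).1 hcon
    have hpx : p - x ∈ V := by
      have := AffineSubspace.vsub_mem_direction hpL hxL
      simpa [hV] using this
    have hdec : y - p = (pr y - (p - x)) + ((y - x) - pr y) := by abel
    have h2 : ‖y - p‖^2 = ‖pr y - (p - x)‖^2 + ‖(y - x) - pr y‖^2 := by
      rw [hdec]; exact pyth _ _ (Submodule.sub_mem _ (hprV y) hpx) (hworth y)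
    have hle : ‖(y - x) - pr y‖ ≤ dist y p := by
      rw [dist_eq_norm]
      nlinarith [norm_nonneg (y - p), norm_nonneg ((y - x) - pr y),
        norm_nonneg (pr y - (p - x))]
    linarith
  have hsep : ∀ y z : H, y ∈ A → z ∈ A → s0 ≤ dist y z → 2 * r ≤ ‖pr y - pr z‖ := by
    intro y z hy hz hdist
    have hwy : ‖(y - x) - pr y‖ ≤ r := hwle y hy.1
    have hwz : ‖(z - x) - pr z‖ ≤ r := hwle z hz.1
    have hdec : y - z = (pr y - pr z) + (((y - x) - pr y) - ((z - x) - pr z)) := by abel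
    have h2 : ‖y - z‖^2 = ‖pr y - pr z‖^2 + ‖((y - x) - pr y) - ((z - x) - pr z)‖^2 := by
      rw [hdec]
      exact pyth _ _ (Submodule.sub_mem _ (hprV y) (hprV z))
        (Submodule.sub_mem _ (hworth y) (hworth z))
    have hwd : ‖((y - x) - pr y) - ((z - x) - pr z)‖ ≤ 2 * r :=
      (norm_sub_le _ _).trans (by linarith)
    rw [dist_eq_norm] at hdist
    have hsq : s0^2 = 8 * r^2 := by
      have h22 : Real.sqrt 2 ^ 2 = 2 := Real.sq_sqrt (by norm_num)
      rw [hs0]; nlinarith [h22]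
    have ha : s0^2 ≤ ‖y - z‖^2 := by nlinarith [hs00]
    have hb : ‖((y - x) - pr y) - ((z - x) - pr z)‖^2 ≤ (2*r)^2 := by
      nlinarith [norm_nonneg (((y - x) - pr y) - ((z - x) - pr z))]
    have hP2 : (2*r)^2 ≤ ‖pr y - pr z‖^2 := by nlinarith [h2, hsq, ha, hb]
    nlinarith [hP2, norm_nonneg (pr y - pr z), hr0]
  -- the counting bound via Euclidean packing
  set n := Module.finrank ℝ V with hn
  have hnm : n = m := by rw [hn, ← hL]
  set e := (stdOrthonormalBasis ℝ V).repr with he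
  set g : H → EuclideanSpace ℝ (Fin n) := fun y => e (V.orthogonalProjectionOnto (y - x)) with hg
  have hgdist : ∀ y z : H, dist (g y) (g z) = ‖pr y - pr z‖ := by
    intro y z
    rw [hg]
    simp only
    rw [e.isometry.dist_eq, dist_eq_norm, ← Submodule.coe_sub]
    rfl
  have hgnorm : ∀ y : H, ‖g y‖ = ‖pr y‖ := by
    intro y
    rw [hg]
    simp only
    rw [e.norm_map]
    rfl
  have hprnorm : ∀ y : H, y ∈ A → ‖pr y‖ ≤ t + r := by
    intro y hy
    have hyx : ‖y - x‖ ≤ t := by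
      have := hy.2
      rw [mem_closedBall, dist_eq_norm] at this
      exact this
    have hw : ‖(y - x) - pr y‖ ≤ r := hwle y hy.1
    calc ‖pr y‖ = ‖(y - x) - ((y - x) - pr y)‖ := by congr 1; abel
      _ ≤ ‖y - x‖ + ‖(y - x) - pr y‖ := norm_sub_le _ _
      _ ≤ t + r := add_le_add hyx hw
  set good : Finset H → Prop := fun Y => (↑Y : Set H) ⊆ A ∩ msupport μ ∧
      ∀ y ∈ Y, ∀ z ∈ Y, y ≠ z → s0 ≤ dist y z with hgood
  have hcount : ∀ Y : Finset H, good Y → (Y.card : ℝ) * r ^ m ≤ (t + 2*r) ^ m := by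
    intro Y hY
    have hinj : Set.InjOn g ↑Y := by
      intro a ha b hb hab
      by_contra hne
      have h1 := hY.2 a ha b hb hne
      have h2 := hsep a b (hY.1 ha).1 (hY.1 hb).1 h1
      have h3 : dist (g a) (g b) = 0 := by rw [hab, dist_self]
      rw [hgdist] at h3
      rw [h3] at h2
      linarith
    have hcardim : (Y.image g).card = Y.card := Finset.card_image_of_injOn hinj
    have hpack := packing_aux (n := n) (by rw [hnm]; exact hm1) (Y.image g)
      hr0 (by positivity : (0:ℝ) ≤ t + r)
      (by
        intro u hu
        obtain ⟨a, ha, rfl⟩ := Finset.mem_image.1 hu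
        rw [hgnorm]
        exact hprnorm a (hY.1 ha).1)
      (by
        intro u hu v hv huv
        obtain ⟨a, ha, rfl⟩ := Finset.mem_image.1 hu
        obtain ⟨b, hb, rfl⟩ := Finset.mem_image.1 hv
        have hne : a ≠ b := fun h => huv (by rw [h])
        rw [hgdist]
        exact hsep a b (hY.1 ha).1 (hY.1 hb).1 (hY.2 a ha b hb hne))
    rw [hcardim, hnm] at hpack
    calc (Y.card : ℝ) * r ^ m ≤ (t + r + r) ^ m := hpack
      _ = (t + 2*r) ^ m := by ring
  -- maximal separated set
  set T := {k : ℕ | ∃ Y : Finset H, good Y ∧ Y.card = k} with hT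
  have hT0 : 0 ∈ T := ⟨∅, ⟨by simp, by simp⟩, rfl⟩
  have hTbdd : BddAbove T := by
    refine ⟨Nat.floor ((t + 2*r)^m / r^m), ?_⟩
    rintro k ⟨Y, hY, rfl⟩
    apply Nat.le_floor
    rw [le_div_iff₀ (by positivity)]
    exact hcount Y hY
  obtain ⟨Y₀, hY₀good, hY₀card⟩ := Nat.sSup_mem ⟨0, hT0⟩ hTbdd
  have hk := hcount Y₀ hY₀good
  have hY₀sub : (↑Y₀ : Set H) ⊆ A ∩ msupport μ := hY₀good.1
  have hcover : A ∩ msupport μ ⊆ ⋃ y ∈ Y₀, closedBall y s0 := by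
    intro z hz
    by_contra hzc
    simp only [Set.mem_iUnion, mem_closedBall, not_exists] at hzc
    push_neg at hzc
    have hzc' : ∀ y ∈ Y₀, s0 < dist z y := hzc
    have hzY : z ∉ Y₀ := by
      intro h
      have := hzc' z h
      rw [dist_self] at this
      linarith
    have hgood' : good (insert z Y₀) := by
      constructor
      · intro w hw
        rcases Finset.mem_insert.1 (Finset.mem_coe.1 hw) with rfl | hw'
        · exact hz
        · exact hY₀good.1 hw'
      · intro a ha b hb hab
        rcases Finset.mem_insert.1 ha with rfl | ha'
        · rcases Finset.mem_insert.1 hb with rfl | hb'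
          · exact absurd rfl hab
          · exact (hzc' b hb').le
        · rcases Finset.mem_insert.1 hb with rfl | hb'
          · rw [dist_comm]; exact (hzc' a ha').le
          · exact hY₀good.2 a ha' b hb' hab
    have hmem : Y₀.card + 1 ∈ T :=
      ⟨insert z Y₀, hgood', by rw [Finset.card_insert_of_notMem hzY]⟩
    have hle := le_csSup hTbdd hmem
    omega
  clear hg he hn
  clear_value T good g e pr V s0 A r K
  -- measure chain
  have hmeas1 : μ A ≤ μ (A ∩ msupport μ) := by
    have h := le_trans
      (measure_mono (show A ⊆ (A ∩ msupport μ) ∪ (msupport μ)ᶜ by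
        intro z hz
        by_cases h : z ∈ msupport μ
        · exact Or.inl ⟨hz, h⟩
        · exact Or.inr h))
      (measure_union_le (μ := μ) _ _)
    rwa [msupport_compl_null, add_zero] at h
  have hmeas2 : μ (A ∩ msupport μ) ≤ ∑ y ∈ Y₀, μ (closedBall y s0) :=
    (measure_mono hcover).trans (measure_biUnion_finset_le (μ := μ) _ _)
  have hmeas3 : ∑ y ∈ Y₀, μ (closedBall y s0) ≤
      ENNReal.ofReal ((Y₀.card : ℝ) * (Cμ * s0 ^ d)) := by
    calc ∑ y ∈ Y₀, μ (closedBall y s0) ≤ ∑ _y ∈ Y₀, ENNReal.ofReal (Cμ * s0 ^ d) :=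
          Finset.sum_le_sum fun y hy =>
            measure_closedBall_le_of_dreg ⟨hC1, hub⟩ ht htd (hY₀sub hy).2 hs00
      _ = ENNReal.ofReal ((Y₀.card : ℝ) * (Cμ * s0 ^ d)) := by
          rw [Finset.sum_const, nsmul_eq_mul,
            ENNReal.ofReal_mul (by positivity : (0:ℝ) ≤ (Y₀.card : ℝ)),
            ENNReal.ofReal_natCast]
  refine (hmeas1.trans (hmeas2.trans hmeas3)).trans (ENNReal.ofReal_le_ofReal ?_)
  -- final real arithmetic
  have h2t : t + 2*r ≤ 2*t := by rw [hr]; nlinarith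
  have hpow : (t + 2*r)^m ≤ (2*t)^m := pow_le_pow_left₀ (by linarith) h2t m
  have hmain : ((Y₀.card : ℝ) * (Cμ * s0 ^ d)) * r ^ m ≤ (K * Cμ * ε ^ (d-m) * t ^ d) * r ^ m := by
    calc ((Y₀.card : ℝ) * (Cμ * s0 ^ d)) * r ^ m
        = ((Y₀.card : ℝ) * r ^ m) * (Cμ * s0 ^ d) := by ring
      _ ≤ (2*t)^m * (Cμ * s0 ^ d) :=
          mul_le_mul_of_nonneg_right (hk.trans hpow)
            (mul_nonneg hC0.le (pow_nonneg hs00.le d))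
      _ = (K * Cμ * ε ^ (d-m) * t ^ d) * r ^ m := by
          rw [hKexp, hs0, hr]
          have hεd : ε ^ (d - m) * ε ^ m = ε ^ d := by
            rw [← pow_add, Nat.sub_add_cancel hmd.le]
          calc (2*t)^m * (Cμ * (2*Real.sqrt 2*(ε*t))^d)
              = 2^m * (2*Real.sqrt 2)^d * Cμ * (ε^(d-m) * ε^m) * t^d * t^m := by
                rw [hεd]; ring
            _ = 2^m * (2*Real.sqrt 2)^d * Cμ * ε^(d-m) * t^d * (ε*t)^m := by ring
  exact le_of_mul_le_mul_right hmain (pow_pos hr0 m)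

/-- Tube bound: for 1 ≤ m < d, 0 ≤ ε ≤ 1 and an m-dimensional affine subspace L,
μ(Tube(L, ε·t) ∩ B(x,t)) ≤ 2^{m+3d/2}·Cμ·ε^{d−m}·t^d for x ∈ supp(μ)∩L,
0 < t ≤ diam(supp μ). -/
theorem tube_measure_bound {H : Type*} [NormedAddCommGroup H] [InnerProductSpace ℝ H]
    [CompleteSpace H] [SecondCountableTopology H] [MeasurableSpace H] [BorelSpace H]
    (d : ℕ) (hdim : (d : Cardinal) < Module.rank ℝ H)
    (Cμ : ℝ) (μ : Measure H) (hreg : IsDRegular d Cμ μ)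
    (m : ℕ) (hm1 : 1 ≤ m) (hmd : m < d) (ε : ℝ) (hε0 : 0 ≤ ε) (hε1 : ε ≤ 1)
    (L : AffineSubspace ℝ H) (hL : Module.finrank ℝ L.direction = m)
    (x : H) (hx : x ∈ msupport μ) (hxL : x ∈ L)
    (t : ℝ) (ht : 0 < t) (htd : ENNReal.ofReal t ≤ EMetric.diam (msupport μ)) :
    μ ({y | Metric.infDist y (L : Set H) ≤ ε * t} ∩ closedBall x t) ≤
      ENNReal.ofReal ((2 : ℝ) ^ ((m : ℝ) + 3 * (d : ℝ) / 2) * Cμ * ε ^ (d - m) * t ^ d) := by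
  rcases eq_or_lt_of_le hε0 with rfl | hε0'
  · -- ε = 0 : the tube has measure zero
    have hbound : ∀ c : ℝ, 0 < c → c ≤ 1 →
        μ ({y | Metric.infDist y (L : Set H) ≤ 0 * t} ∩ closedBall x t) ≤
          ENNReal.ofReal ((2 : ℝ) ^ ((m : ℝ) + 3 * (d : ℝ) / 2) * Cμ * c ^ (d - m) * t ^ d) := by
      intro c hc0 hc1
      refine le_trans (measure_mono ?_)
        (tube_bound_pos d Cμ μ hreg m hm1 hmd c hc0 hc1 L hL x hx hxL t ht htd)
      intro z hz
      refine ⟨?_, hz.2⟩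
      have h1 : Metric.infDist z (L : Set H) ≤ 0 * t := hz.1
      have h2 : (0:ℝ) * t ≤ c * t := by nlinarith
      exact le_trans h1 h2
    have htend : Filter.Tendsto
        (fun c : ℝ => ENNReal.ofReal ((2 : ℝ) ^ ((m : ℝ) + 3 * (d : ℝ) / 2) * Cμ * c ^ (d - m) * t ^ d))
        (nhdsWithin 0 (Set.Ioi 0)) (nhds 0) := by
      have h0 : ENNReal.ofReal ((2 : ℝ) ^ ((m : ℝ) + 3 * (d : ℝ) / 2) * Cμ * (0:ℝ) ^ (d - m) * t ^ d) = 0 := by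
        rw [zero_pow (by omega : d - m ≠ 0)]
        simp
      rw [← h0]
      refine Filter.Tendsto.mono_left ?_ nhdsWithin_le_nhds
      have hc : Continuous fun c : ℝ =>
          (2 : ℝ) ^ ((m : ℝ) + 3 * (d : ℝ) / 2) * Cμ * c ^ (d - m) * t ^ d :=
        ((continuous_const.mul (continuous_pow (d - m))).mul continuous_const)
      exact (ENNReal.continuous_ofReal.comp hc).tendsto 0
    have hev : ∀ᶠ c in nhdsWithin (0:ℝ) (Set.Ioi 0),
        μ ({y | Metric.infDist y (L : Set H) ≤ 0 * t} ∩ closedBall x t) ≤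
          ENNReal.ofReal ((2 : ℝ) ^ ((m : ℝ) + 3 * (d : ℝ) / 2) * Cμ * c ^ (d - m) * t ^ d) := by
      filter_upwards [Ioc_mem_nhdsGT_of_mem (by simp : (0:ℝ) ∈ Set.Ico 0 1)] with c hc
      exact hbound c hc.1 hc.2
    have := ge_of_tendsto htend hev
    simp only [nonpos_iff_eq_zero] at this
    rw [this]
    exact zero_le
  · exact tube_bound_pos d Cμ μ hreg m hm1 hmd ε hε0' hε1 L hL x hx hxL t ht htd
end

section
/- Let μ be a d-regular measure on a Hilbert space H. There exist constants 0 < δ_μ < 1 and ω_μ > 0 depending only on d and C_μ such that for every x ∈ supp(μ) and 0 < t ≤ diam(supp(μ)), there are points x₀, …, x_{d+1} ∈ supp(μ) with B(x_i, δ_μ·t) ⊆ B(x,t) for all i, and such that for every choice of points x̃_i ∈ B(x_i, δ_μ·t) (i = 0,…,d+1) and every 0 ≤ j ≤ d+1, the d-content of the d+2 points with the j-th omitted satisfies M_d(x̃₀,…,x̂̃_j,…,x̃_{d+1}) ≥ ω_μ · t^d. -/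
open MeasureTheory Metric Finset

noncomputable section

open scoped ENNReal NNReal RealInnerProductSpace

section aux
variable {X : Type*} [MetricSpace X] [SecondCountableTopology X] [MeasurableSpace X]
  (μ : Measure X)

lemma msupport_compl_null_s8 : μ (msupport μ)ᶜ = 0 := by
  apply measure_null_of_locally_null
  intro x hx
  simp only [msupport, Set.mem_compl_iff, Set.mem_setOf_eq, not_forall] at hx
  obtain ⟨r, hr, hpos⟩ := hx
  exact ⟨closedBall x r, mem_nhdsWithin_of_mem_nhds (closedBall_mem_nhds x hr),
    le_antisymm (not_lt.mp hpos) zero_le⟩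

lemma null_of_disjoint_msupport {w : X} {r : ℝ}
    (h : ∀ z ∈ msupport μ, ¬ dist z w ≤ r) : μ (closedBall w r) = 0 := by
  refine measure_mono_null ?_ (msupport_compl_null_s8 μ)
  intro y hy hys
  exact h y hys (mem_closedBall.mp hy)

end aux



lemma card_le_of_separated {m : ℕ} {F : Finset (EuclideanSpace ℝ (Fin m))} {r R : ℝ}
    (hr : 0 < r) (hR : 0 ≤ R) (hF : ∀ w ∈ F, ‖w‖ ≤ R)
    (hsep : ∀ w ∈ F, ∀ w' ∈ F, w ≠ w' → 2 * r < dist w w') :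
    (F.card : ℝ) ≤ ((R + r) / r) ^ m := by
  have c0 : (volume : Measure (EuclideanSpace ℝ (Fin m))) (ball 0 1) ≠ 0 :=
    (measure_ball_pos _ _ one_pos).ne'
  have cT : (volume : Measure (EuclideanSpace ℝ (Fin m))) (ball 0 1) ≠ ⊤ :=
    measure_ball_lt_top.ne
  have hdisj : (F : Set (EuclideanSpace ℝ (Fin m))).PairwiseDisjoint
      (fun w => closedBall w r) := by
    intro a ha b hb hab
    exact closedBall_disjoint_closedBall (by linarith [hsep a ha b hb hab])
  have hsum : ∑ w ∈ F, volume (closedBall w r)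
      ≤ volume (closedBall (0 : EuclideanSpace ℝ (Fin m)) (R + r)) := by
    rw [← measure_biUnion_finset hdisj (fun w _ => measurableSet_closedBall)]
    refine measure_mono ?_
    intro y hy
    simp only [Set.mem_iUnion] at hy
    obtain ⟨w, hwF, hyw⟩ := hy
    have hw := hF w hwF
    simp only [mem_closedBall] at hyw ⊢
    calc dist y 0 ≤ dist y w + dist w 0 := dist_triangle _ _ _
      _ ≤ r + R := by rw [dist_zero_right] at *; exact add_le_add hyw hw
      _ = R + r := by ring
  have hball : ∀ w : EuclideanSpace ℝ (Fin m), volume (closedBall w r)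
      = ENNReal.ofReal (r ^ m) * volume (ball (0 : EuclideanSpace ℝ (Fin m)) 1) := by
    intro w
    rw [Measure.addHaar_closedBall _ w hr.le, finrank_euclideanSpace_fin]
  have hball2 : volume (closedBall (0 : EuclideanSpace ℝ (Fin m)) (R + r))
      = ENNReal.ofReal ((R + r) ^ m) * volume (ball (0 : EuclideanSpace ℝ (Fin m)) 1) := by
    rw [Measure.addHaar_closedBall _ _ (by linarith), finrank_euclideanSpace_fin]
  simp only [hball, Finset.sum_const, nsmul_eq_mul, hball2] at hsum
  rw [← mul_assoc] at hsum
  have hkey : (F.card : ℝ≥0∞) * ENNReal.ofReal (r ^ m) ≤ ENNReal.ofReal ((R + r) ^ m) :=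
    (ENNReal.mul_le_mul_iff_left c0 cT).mp hsum
  rw [← ENNReal.ofReal_natCast, ← ENNReal.ofReal_mul (by positivity)] at hkey
  have h2 := (ENNReal.ofReal_le_ofReal_iff (by positivity)).mp hkey
  rw [div_pow, le_div_iff₀ (by positivity)]
  exact h2

lemma exists_net {X : Type*} [MetricSpace X] (K : Set X) {r : ℝ} {N : ℕ} (hr : 0 ≤ r)
    (hN : ∀ F : Finset X, ↑F ⊆ K →
      (∀ w ∈ F, ∀ w' ∈ F, w ≠ w' → 2 * r < dist w w') → F.card ≤ N) :
    ∃ F : Finset X, ↑F ⊆ K ∧ F.card ≤ N ∧ ∀ y ∈ K, ∃ w ∈ F, dist y w ≤ 2 * r := by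
  classical
  set A : Set ℕ := {n | ∃ F : Finset X, ↑F ⊆ K ∧
    (∀ w ∈ F, ∀ w' ∈ F, w ≠ w' → 2 * r < dist w w') ∧ F.card = n} with hA
  have h0 : 0 ∈ A := ⟨∅, by simp⟩
  have hbdd : BddAbove A := ⟨N, fun n ⟨F, h1, h2, h3⟩ => h3 ▸ hN F h1 h2⟩
  obtain ⟨F, hFK, hFsep, hFcard⟩ := Nat.sSup_mem ⟨0, h0⟩ hbdd
  refine ⟨F, hFK, hFcard ▸ hN F hFK hFsep, ?_⟩
  intro y hy
  by_contra hfar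
  push_neg at hfar
  have hyF : y ∉ F := fun h => by
    have h2 := hfar y h
    simp only [dist_self] at h2
    linarith
  have hmem : F.card + 1 ∈ A := by
    refine ⟨insert y F, ?_, ?_, by rw [Finset.card_insert_of_notMem hyF]⟩
    · intro z hz
      rcases Finset.mem_insert.mp (by exact_mod_cast hz) with h | h
      · exact h ▸ hy
      · exact hFK h
    · intro w hw w' hw' hww'
      rcases Finset.mem_insert.mp hw with h | h <;> rcases Finset.mem_insert.mp hw' with h' | h'
      · exact absurd (h.trans h'.symm) hww'
      · rw [h]; exact hfar w' h'
      · rw [h', dist_comm]; exact hfar w h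
      · exact hFsep w h w' h' hww'
  have hle := le_csSup hbdd hmem
  rw [hFcard] at hle
  omega


lemma det_updateRow_sub_sum {n : ℕ} {R : Type*} [CommRing R] (A : Matrix (Fin n) (Fin n) R)
    (k : Fin n) (c : Fin n → R) (s : Finset (Fin n)) (hk : k ∉ s) :
    Matrix.det (A.updateRow k (A k - ∑ j ∈ s, c j • A j)) = A.det := by
  classical
  induction s using Finset.induction_on with
  | empty => simp
  | @insert a s ha ih =>
      have hks : k ∉ s := fun h => hk (Finset.mem_insert_of_mem h)
      have hka : k ≠ a := fun h => hk (h ▸ Finset.mem_insert_self a s)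
      set M := A.updateRow k (A k - ∑ j ∈ s, c j • A j) with hM
      have h1 : A.updateRow k (A k - ∑ j ∈ insert a s, c j • A j)
          = M.updateRow k (M k + (-c a) • M a) := by
        ext i j
        by_cases hik : i = k
        · subst hik
          rw [Matrix.updateRow_self, Matrix.updateRow_self, hM, Matrix.updateRow_self,
            Matrix.updateRow_ne (Ne.symm hka), Finset.sum_insert ha]
          simp only [Matrix.sub_apply, Matrix.add_apply, Matrix.smul_apply, Finset.sum_apply,
            smul_eq_mul, neg_mul, Pi.add_apply, Pi.sub_apply, Pi.smul_apply, Pi.neg_apply]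
          ring
        · rw [Matrix.updateRow_ne hik, Matrix.updateRow_ne hik, hM, Matrix.updateRow_ne hik]
      rw [h1, Matrix.det_updateRow_add_smul_self M hka (-c a), ih hks]

lemma gram_det_ge {H : Type*} [NormedAddCommGroup H] [InnerProductSpace ℝ H]
    [CompleteSpace H] :
    ∀ (n : ℕ) (v : Fin n → H) (r : ℝ), 0 ≤ r →
    (∀ i : Fin n, ∀ w ∈ Submodule.span ℝ (v '' {j | j < i}), r ≤ ‖v i - w‖) →
    r ^ (2 * n) ≤ Matrix.det (Matrix.of fun i j : Fin n => (⟪v i, v j⟫ : ℝ)) := by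
  intro n
  induction n with
  | zero => intro v r hr _; simp [Matrix.det_fin_zero]
  | succ n ih =>
      intro v r hr hsep
      set vi : Fin n → H := v ∘ Fin.castSucc with hvi
      set V : Submodule ℝ H := Submodule.span ℝ (Set.range vi) with hV
      haveI : FiniteDimensional ℝ V := FiniteDimensional.span_of_finite ℝ (Set.finite_range vi)
      have hrange : Set.range vi = v '' {j | j < Fin.last n} := by
        ext z
        constructor
        · rintro ⟨a, rfl⟩
          exact ⟨Fin.castSucc a, Fin.castSucc_lt_last a, rfl⟩
        · rintro ⟨j, hj, rfl⟩
          exact ⟨⟨j, Fin.lt_iff_val_lt_val.mp hj⟩, by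
            simp [hvi, Fin.castSucc, Fin.ext_iff]⟩
      set u : H := (V.orthogonalProjectionOnto (v (Fin.last n)) : H) with hu
      set w' : H := v (Fin.last n) - u with hw'
      have huV : u ∈ V := (V.orthogonalProjectionOnto (v (Fin.last n))).2
      have hworth : ∀ z ∈ V, ⟪w', z⟫ = 0 := by
        intro z hz
        have := Submodule.sub_starProjection_mem_orthogonal (K := V) (v (Fin.last n))
        rw [Submodule.mem_orthogonal] at this
        rw [real_inner_comm]
        exact this z hz
      have hwnorm : r ≤ ‖w'‖ := by
        refine hsep (Fin.last n) u ?_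
        rw [← hrange] at *
        exact huV
      obtain ⟨c, hc⟩ := (Submodule.mem_span_range_iff_exists_fun ℝ).mp huV
      set G : Matrix (Fin (n + 1)) (Fin (n + 1)) ℝ :=
        Matrix.of fun i j => (⟪v i, v j⟫ : ℝ) with hG
      set B : Matrix (Fin (n + 1)) (Fin (n + 1)) ℝ :=
        G.updateRow (Fin.last n) (G (Fin.last n) - ∑ a : Fin n, c a • G (Fin.castSucc a)) with hB
      set c' : Fin (n + 1) → ℝ := fun j => if hj : (j : ℕ) < n then c ⟨j, hj⟩ else 0 with hc'
      have hsum_eq : ∑ a : Fin n, c a • G (Fin.castSucc a)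
          = ∑ j ∈ Finset.univ.image Fin.castSucc, c' j • G j := by
        rw [Finset.sum_image (fun a _ b _ h => Fin.castSucc_injective n h)]
        refine Finset.sum_congr rfl fun a _ => ?_
        have h1 : ((Fin.castSucc a : Fin (n + 1)) : ℕ) < n := a.2
        simp only [hc', h1, dif_pos]
        congr 1
      have hklast : Fin.last n ∉ Finset.univ.image (Fin.castSucc (n := n)) := by
        simp only [Finset.mem_image, Finset.mem_univ, true_and, not_exists]
        intro a h
        exact absurd (congrArg Fin.val h) (by simp; omega)
      have hdetGB : B.det = G.det := by
        rw [hB, hsum_eq]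
        exact det_updateRow_sub_sum G (Fin.last n) c' _ hklast
      have hBrow : ∀ j : Fin (n + 1), B (Fin.last n) j = ⟪w', v j⟫ := by
        intro j
        rw [hB, Matrix.updateRow_self]
        simp only [Pi.sub_apply, Finset.sum_apply, Pi.smul_apply, smul_eq_mul]
        have h2 : ⟪u, v j⟫ = ∑ a, c a * ⟪vi a, v j⟫ := by
          rw [← hc, sum_inner]
          exact Finset.sum_congr rfl fun a _ => real_inner_smul_left _ _ _
        rw [hw', inner_sub_left, h2]
        rfl
      have hB0 : ∀ j : Fin (n + 1), j ≠ Fin.last n → B (Fin.last n) j = 0 := by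
        intro j hj
        rw [hBrow j]
        refine hworth (v j) ?_
        have : v j ∈ Set.range vi := by
          refine ⟨⟨(j : ℕ), ?_⟩, ?_⟩
          · have := j.2
            have hne : (j : ℕ) ≠ n := fun h => hj (Fin.ext h)
            omega
          · show v (Fin.castSucc _) = v j
            congr 1
        exact Submodule.subset_span this
      have hBll : B (Fin.last n) (Fin.last n) = ‖w'‖ ^ 2 := by
        rw [hBrow]
        have hv : v (Fin.last n) = u + w' := by rw [hw']; abel
        rw [hv, inner_add_right, hworth u huV, zero_add, real_inner_self_eq_norm_sq]
      have hsub : (B.submatrix (Fin.last n).succAbove (Fin.last n).succAbove)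
          = Matrix.of fun i j : Fin n => (⟪vi i, vi j⟫ : ℝ) := by
        ext a b
        rw [Matrix.submatrix_apply, Fin.succAbove_last]
        rw [hB, Matrix.updateRow_ne (Fin.castSucc_lt_last a).ne]
        rfl
      have hdetB : B.det = ‖w'‖ ^ 2
          * (Matrix.of fun i j : Fin n => (⟪vi i, vi j⟫ : ℝ)).det := by
        rw [Matrix.det_succ_row B (Fin.last n)]
        rw [Finset.sum_eq_single (Fin.last n)]
        · rw [hBll, hsub]
          have : (-1 : ℝ) ^ ((Fin.last n : ℕ) + (Fin.last n : ℕ)) = 1 :=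
            Even.neg_one_pow ⟨n, by simp [Fin.val_last]⟩
          rw [this, one_mul]
        · intro j _ hj
          rw [hB0 j hj, mul_zero, zero_mul]
        · intro h
          exact absurd (Finset.mem_univ _) h
      have hIH : r ^ (2 * n) ≤ (Matrix.of fun i j : Fin n => (⟪vi i, vi j⟫ : ℝ)).det := by
        refine ih vi r hr ?_
        intro i w hw
        have hset : vi '' {j : Fin n | j < i} = v '' {j : Fin (n + 1) | j < Fin.castSucc i} := by
          ext z
          constructor
          · rintro ⟨a, ha, rfl⟩
            exact ⟨Fin.castSucc a, Fin.castSucc_lt_castSucc_iff.mpr ha, rfl⟩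
          · rintro ⟨j, hj, rfl⟩
            have hjv : (j : ℕ) < (i : ℕ) := hj
            have hjn : (j : ℕ) < n := hjv.trans i.2
            refine ⟨⟨(j : ℕ), hjn⟩, hjv, ?_⟩
            show v (Fin.castSucc _) = v j
            congr 1
        rw [hset] at hw
        exact hsep (Fin.castSucc i) w hw
      have hfin : G.det = ‖w'‖ ^ 2 * (Matrix.of fun i j : Fin n => (⟪vi i, vi j⟫ : ℝ)).det := by
        rw [← hdetGB, hdetB]
      show r ^ (2 * (n + 1)) ≤ G.det
      rw [hfin]
      have h2 : r ^ 2 ≤ ‖w'‖ ^ 2 := by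
        have := pow_le_pow_left₀ hr hwnorm 2
        simpa using this
      calc r ^ (2 * (n + 1)) = r ^ 2 * r ^ (2 * n) := by ring
        _ ≤ ‖w'‖ ^ 2 * (Matrix.of fun i j : Fin n => (⟪vi i, vi j⟫ : ℝ)).det :=
            mul_le_mul h2 hIH (by positivity) (by positivity)

section tube
variable {H : Type*} [NormedAddCommGroup H] [InnerProductSpace ℝ H]
    [SecondCountableTopology H] [MeasurableSpace H] [BorelSpace H]
    {d : ℕ} {Cμ : ℝ} {μ : Measure H}

lemma tube_measure_le (hd : 1 ≤ d) (hreg : IsDRegular d Cμ μ)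
    {x : H} (hx : x ∈ msupport μ) {t ρ : ℝ} (ht : 0 < t)
    (hdiam : ENNReal.ofReal t ≤ EMetric.diam (msupport μ))
    (hρ : 0 < ρ) (hρ8 : ρ ≤ 1 / 8)
    (W : AffineSubspace ℝ H) (hWne : (W : Set H).Nonempty)
    [FiniteDimensional ℝ W.direction]
    (hWdim : Module.finrank ℝ W.direction ≤ d - 1) :
    μ {y | y ∈ closedBall x t ∧ Metric.infDist y (W : Set H) ≤ ρ * t}
      ≤ ENNReal.ofReal ((5 / ρ) ^ (d - 1) * (Cμ * (8 * (ρ * t)) ^ d)) := by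
  classical
  set r : ℝ := ρ * t with hr
  have hr0 : 0 < r := mul_pos hρ ht
  set S : Set H := {y | y ∈ closedBall x t ∧ Metric.infDist y (W : Set H) ≤ r} with hS
  set K : Set H := (W : Set H) ∩ closedBall x (2 * t) with hK
  -- every point of S is within 2r of a point of K
  have hSK : ∀ y ∈ S, ∃ w ∈ K, dist y w ≤ 2 * r := by
    rintro y ⟨hy1, hy2⟩
    have : Metric.infDist y (W : Set H) < 2 * r := lt_of_le_of_lt hy2 (by linarith)
    obtain ⟨w, hwW, hw⟩ := (Metric.infDist_lt_iff hWne).mp this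
    refine ⟨w, ⟨hwW, ?_⟩, hw.le⟩
    have : dist w x ≤ dist w y + dist y x := dist_triangle _ _ _
    rw [mem_closedBall] at hy1 ⊢
    rw [dist_comm] at hw
    have hrt : 2 * r ≤ t / 4 := by
      rw [hr]; nlinarith
    nlinarith [this, hw.le, hy1]
  rcases Set.eq_empty_or_nonempty K with hKe | ⟨w₁, hw₁⟩
  · have : S = ∅ := by
      rw [Set.eq_empty_iff_forall_notMem]
      intro y hy
      obtain ⟨w, hw, -⟩ := hSK y hy
      rw [hKe] at hw
      exact hw
    rw [this, measure_empty]
    exact zero_le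
  -- cardinality bound for separated subsets of K
  set m : ℕ := Module.finrank ℝ W.direction with hm
  set N : ℕ := ⌊(5 / ρ) ^ (d - 1)⌋₊ with hN
  have hvsub : ∀ w ∈ K, w - w₁ ∈ W.direction := by
    intro w hw
    exact AffineSubspace.vsub_mem_direction hw.1 hw₁.1
  have hNcard : ∀ F : Finset H, ↑F ⊆ K →
      (∀ w ∈ F, ∀ w' ∈ F, w ≠ w' → 2 * r < dist w w') → F.card ≤ N := by
    intro F hFK hFsep
    set e := (stdOrthonormalBasis ℝ W.direction).repr with he
    set g : H → EuclideanSpace ℝ (Fin m) := fun w =>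
      if h : w - w₁ ∈ W.direction then e ⟨w - w₁, h⟩ else 0 with hg
    have hgdist : ∀ w ∈ K, ∀ w' ∈ K, dist (g w) (g w') = dist w w' := by
      intro w hw w' hw'
      rw [hg]
      simp only [dif_pos (hvsub w hw), dif_pos (hvsub w' hw')]
      rw [e.dist_map, Subtype.dist_eq]
      exact dist_sub_right w w' w₁
    have hgnorm : ∀ w ∈ K, ‖g w‖ ≤ 4 * t := by
      intro w hw
      rw [hg]
      simp only [dif_pos (hvsub w hw)]
      rw [e.norm_map]
      have : ‖w - w₁‖ = dist w w₁ := (dist_eq_norm w w₁).symm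
      show ‖w - w₁‖ ≤ 4 * t
      rw [this]
      have h1 : dist w x ≤ 2 * t := hw.2
      have h2 : dist w₁ x ≤ 2 * t := hw₁.2
      calc dist w w₁ ≤ dist w x + dist x w₁ := dist_triangle _ _ _
        _ ≤ 2 * t + 2 * t := by rw [dist_comm x w₁]; exact add_le_add h1 h2
        _ = 4 * t := by ring
    have hinj : Set.InjOn g ↑F := by
      intro w hw w' hw' hww'
      by_contra hne
      have := hFsep w hw w' hw' hne
      rw [← hgdist w (hFK hw) w' (hFK hw'), hww', dist_self] at this
      linarith
    set F' : Finset (EuclideanSpace ℝ (Fin m)) := F.image g with hF'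
    have hcard' : F'.card = F.card := Finset.card_image_of_injOn hinj
    have hsep' : ∀ u ∈ F', ∀ u' ∈ F', u ≠ u' → 2 * r < dist u u' := by
      intro u hu u' hu' huu'
      obtain ⟨w, hw, rfl⟩ := Finset.mem_image.mp hu
      obtain ⟨w', hw', rfl⟩ := Finset.mem_image.mp hu'
      have hne : w ≠ w' := fun h => huu' (by rw [h])
      rw [hgdist w (hFK hw) w' (hFK hw')]
      exact hFsep w hw w' hw' hne
    have hbound : (F'.card : ℝ) ≤ ((4 * t + r) / r) ^ m :=
      card_le_of_separated hr0 (by linarith) (fun u hu => by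
        obtain ⟨w, hw, rfl⟩ := Finset.mem_image.mp hu
        exact hgnorm w (hFK hw)) hsep'
    have hratio : ((4 * t + r) / r) ^ m ≤ (5 / ρ) ^ (d - 1) := by
      have hbase : (4 * t + r) / r ≤ 5 / ρ := by
        rw [hr, div_le_div_iff₀ (by positivity) hρ]
        have : ρ ≤ 1 := by linarith
        nlinarith
      have hbase1 : (1 : ℝ) ≤ (4 * t + r) / r := by
        rw [le_div_iff₀ hr0]
        linarith
      calc ((4 * t + r) / r) ^ m ≤ ((4 * t + r) / r) ^ (d - 1) :=
            pow_le_pow_right₀ hbase1 (hm ▸ hWdim)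
        _ ≤ (5 / ρ) ^ (d - 1) := pow_le_pow_left₀ (by linarith) hbase _
    have : (F.card : ℝ) ≤ (5 / ρ) ^ (d - 1) := by
      rw [← hcard']
      exact hbound.trans hratio
    exact Nat.le_floor this
  obtain ⟨F, hFK, hFcard, hFcov⟩ := exists_net K hr0.le hNcard
  have hScov : S ⊆ ⋃ f ∈ F, closedBall f (4 * r) := by
    intro y hy
    obtain ⟨w, hwK, hyw⟩ := hSK y hy
    obtain ⟨f, hfF, hwf⟩ := hFcov w hwK
    simp only [Set.mem_iUnion]
    exact ⟨f, hfF, mem_closedBall.mpr (by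
      calc dist y f ≤ dist y w + dist w f := dist_triangle _ _ _
        _ ≤ 2 * r + 2 * r := add_le_add hyw hwf
        _ = 4 * r := by ring)⟩
  have hball : ∀ f : H, μ (closedBall f (4 * r)) ≤ ENNReal.ofReal (Cμ * (8 * r) ^ d) := by
    intro f
    by_cases hz : ∃ z ∈ msupport μ, dist z f ≤ 4 * r
    · obtain ⟨z, hzs, hzf⟩ := hz
      have hsub : closedBall f (4 * r) ⊆ closedBall z (8 * r) := by
        intro y hy
        rw [mem_closedBall] at hy ⊢
        calc dist y z ≤ dist y f + dist f z := dist_triangle _ _ _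
          _ ≤ 4 * r + 4 * r := add_le_add hy (by rw [dist_comm]; exact hzf)
          _ = 8 * r := by ring
      have h8 : ENNReal.ofReal (8 * r) ≤ EMetric.diam (msupport μ) := by
        refine le_trans (ENNReal.ofReal_le_ofReal ?_) hdiam
        rw [hr]; nlinarith
      exact le_trans (measure_mono hsub)
        ((hreg.2 z hzs (8 * r) (by positivity) h8).2)
    · push_neg at hz
      rw [null_of_disjoint_msupport μ (fun z hzs => not_le.mpr (hz z hzs))]
      exact zero_le
  calc μ S ≤ μ (⋃ f ∈ F, closedBall f (4 * r)) := measure_mono hScov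
    _ ≤ ∑ f ∈ F, μ (closedBall f (4 * r)) := measure_biUnion_finset_le _ _
    _ ≤ ∑ _f ∈ F, ENNReal.ofReal (Cμ * (8 * r) ^ d) := Finset.sum_le_sum fun f _ => hball f
    _ = (F.card : ℝ≥0∞) * ENNReal.ofReal (Cμ * (8 * r) ^ d) := by
        rw [Finset.sum_const, nsmul_eq_mul]
    _ ≤ ENNReal.ofReal ((5 / ρ) ^ (d - 1) * (Cμ * (8 * r) ^ d)) := by
        rw [← ENNReal.ofReal_natCast F.card, ← ENNReal.ofReal_mul (Nat.cast_nonneg _)]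
        refine ENNReal.ofReal_le_ofReal ?_
        have hC : (0 : ℝ) ≤ Cμ * (8 * r) ^ d := by
          have : (1 : ℝ) ≤ Cμ := hreg.1
          positivity
        refine mul_le_mul_of_nonneg_right ?_ hC
        calc (F.card : ℝ) ≤ (N : ℝ) := Nat.cast_le.mpr hFcard
          _ ≤ (5 / ρ) ^ (d - 1) := Nat.floor_le (by positivity)

end tube

noncomputable def rhoConst (d : ℕ) (Cμ : ℝ) : ℝ :=
  min (1 / 8) (1 / (2 * Cμ ^ 2 * 2 ^ d * ((d + 1) * 5 ^ (d - 1) * 8 ^ d)))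

lemma rhoConst_pos {d : ℕ} {Cμ : ℝ} (hC : 1 ≤ Cμ) : 0 < rhoConst d Cμ := by
  have h0 : (0 : ℝ) < Cμ := lt_of_lt_of_le one_pos hC
  unfold rhoConst
  refine lt_min (by norm_num) (by positivity)

lemma rhoConst_le_eighth {d : ℕ} {Cμ : ℝ} : rhoConst d Cμ ≤ 1 / 8 := min_le_left _ _

lemma key_ineq {d k : ℕ} {Cμ t : ℝ} (hd : 1 ≤ d) (hC : 1 ≤ Cμ) (ht : 0 < t)
    (hk : k ≤ d + 1) :
    (k : ℝ) * ((5 / rhoConst d Cμ) ^ (d - 1)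
      * (Cμ * (8 * (rhoConst d Cμ * t)) ^ d)) < Cμ⁻¹ * (t / 2) ^ d := by
  set ρ := rhoConst d Cμ with hρdef
  have hρ : 0 < ρ := rhoConst_pos hC
  have hC0 : (0 : ℝ) < Cμ := lt_of_lt_of_le one_pos hC
  obtain ⟨e, rfl⟩ : ∃ e, d = e + 1 := ⟨d - 1, by omega⟩
  have he : (e + 1) - 1 = e := rfl
  have hA : ρ ≤ 1 / (2 * Cμ ^ 2 * 2 ^ (e + 1) * ((e + 1 + 1) * 5 ^ e * 8 ^ (e + 1))) := by
    rw [hρdef]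
    unfold rhoConst
    refine (min_le_right _ _).trans (le_of_eq ?_)
    have h5 : (e + 1) - 1 = e := rfl
    rw [h5]
    push_cast
    ring
  have hLHS : (k : ℝ) * ((5 / ρ) ^ ((e + 1) - 1) * (Cμ * (8 * (ρ * t)) ^ (e + 1)))
      = (k : ℝ) * Cμ * 5 ^ e * 8 ^ (e + 1) * t ^ (e + 1) * ρ := by
    rw [he, div_pow, mul_pow, mul_pow, pow_succ ρ e]
    field_simp
  rw [hLHS]
  have hstep1 : (k : ℝ) * Cμ * 5 ^ e * 8 ^ (e + 1) * t ^ (e + 1) * ρ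
      ≤ ((e + 1 + 1) : ℝ) * Cμ * 5 ^ e * 8 ^ (e + 1) * t ^ (e + 1) * ρ := by
    have hkle : (k : ℝ) ≤ (e + 1 + 1 : ℝ) := by exact_mod_cast (by exact_mod_cast hk : (k:ℝ) ≤ ((e+1+1 : ℕ) : ℝ))
    have : (0:ℝ) ≤ Cμ * 5 ^ e * 8 ^ (e + 1) * t ^ (e + 1) * ρ := by positivity
    nlinarith
  have hstep2 : ((e + 1 + 1) : ℝ) * Cμ * 5 ^ e * 8 ^ (e + 1) * t ^ (e + 1) * ρ
      ≤ t ^ (e + 1) / (2 * Cμ * 2 ^ (e + 1)) := by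
    have hpos : (0:ℝ) < ((e + 1 + 1) : ℝ) * Cμ * 5 ^ e * 8 ^ (e + 1) * t ^ (e + 1) := by positivity
    calc ((e + 1 + 1) : ℝ) * Cμ * 5 ^ e * 8 ^ (e + 1) * t ^ (e + 1) * ρ
        ≤ ((e + 1 + 1) : ℝ) * Cμ * 5 ^ e * 8 ^ (e + 1) * t ^ (e + 1)
          * (1 / (2 * Cμ ^ 2 * 2 ^ (e + 1) * ((e + 1 + 1) * 5 ^ e * 8 ^ (e + 1)))) :=
          mul_le_mul_of_nonneg_left hA hpos.le
      _ = t ^ (e + 1) / (2 * Cμ * 2 ^ (e + 1)) := by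
          field_simp
  have hstep3 : t ^ (e + 1) / (2 * Cμ * 2 ^ (e + 1)) < Cμ⁻¹ * (t / 2) ^ (e + 1) := by
    rw [div_pow, inv_eq_one_div]
    rw [div_mul_div_comm, one_mul]
    rw [div_lt_div_iff₀ (by positivity) (by positivity)]
    have htpos : (0:ℝ) < t ^ (e + 1) := by positivity
    have h2pos : (0:ℝ) < (2:ℝ) ^ (e + 1) := by positivity
    nlinarith [mul_pos htpos (mul_pos hC0 h2pos)]
  linarith

section escape
variable {H : Type*} [NormedAddCommGroup H] [InnerProductSpace ℝ H]
    [SecondCountableTopology H] [MeasurableSpace H] [BorelSpace H]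
    {d : ℕ} {Cμ : ℝ} {μ : Measure H}

lemma escape_lemma (hd : 1 ≤ d) (hreg : IsDRegular d Cμ μ)
    {x : H} (hx : x ∈ msupport μ) {t : ℝ} (ht : 0 < t)
    (hdiam : ENNReal.ofReal t ≤ EMetric.diam (msupport μ))
    {k : ℕ} (hk : k ≤ d + 1) (W : Fin k → AffineSubspace ℝ H)
    (hne : ∀ l, ((W l : Set H)).Nonempty) (hfd : ∀ l, FiniteDimensional ℝ (W l).direction)
    (hdimW : ∀ l, Module.finrank ℝ (W l).direction ≤ d - 1) :
    ∃ z, z ∈ msupport μ ∧ z ∈ closedBall x (t / 2) ∧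
      ∀ l, rhoConst d Cμ * t < Metric.infDist z ((W l : Set H)) := by
  classical
  set ρ := rhoConst d Cμ with hρdef
  have hC : (1 : ℝ) ≤ Cμ := hreg.1
  have hρ : 0 < ρ := rhoConst_pos hC
  have hρ8 : ρ ≤ 1 / 8 := rhoConst_le_eighth
  set T : Fin k → Set H :=
    fun l => {y | y ∈ closedBall x t ∧ Metric.infDist y ((W l : Set H)) ≤ ρ * t} with hT
  set b : ℝ≥0∞ := ENNReal.ofReal ((5 / ρ) ^ (d - 1) * (Cμ * (8 * (ρ * t)) ^ d)) with hb
  have htube : ∀ l, μ (T l) ≤ b := fun l => by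
    haveI := hfd l
    exact tube_measure_le hd hreg hx ht hdiam hρ hρ8 (W l) (hne l) (hdimW l)
  have hlow : ENNReal.ofReal (Cμ⁻¹ * (t / 2) ^ d) ≤ μ (closedBall x (t / 2)) := by
    refine (hreg.2 x hx (t / 2) (by linarith) ?_).1
    exact le_trans (ENNReal.ofReal_le_ofReal (by linarith)) hdiam
  set Gd : Set H := {z | z ∈ msupport μ ∧ z ∈ closedBall x (t / 2) ∧
    ∀ l, ρ * t < Metric.infDist z ((W l : Set H))} with hGd
  have hcover : closedBall x (t / 2) ⊆ Gd ∪ ((⋃ l, T l) ∪ (msupport μ)ᶜ) := by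
    intro y hy
    by_cases hys : y ∈ msupport μ
    · by_cases hyt : ∀ l, ρ * t < Metric.infDist y ((W l : Set H))
      · exact Or.inl ⟨hys, hy, hyt⟩
      · push_neg at hyt
        obtain ⟨l, hl⟩ := hyt
        refine Or.inr (Or.inl (Set.mem_iUnion.mpr ⟨l, ?_, hl⟩))
        rw [mem_closedBall] at hy ⊢
        linarith
    · exact Or.inr (Or.inr hys)
  have hbound : μ (closedBall x (t / 2)) ≤ μ Gd + (k : ℝ≥0∞) * b := by
    calc μ (closedBall x (t / 2)) ≤ μ (Gd ∪ ((⋃ l, T l) ∪ (msupport μ)ᶜ)) :=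
          measure_mono hcover
      _ ≤ μ Gd + μ ((⋃ l, T l) ∪ (msupport μ)ᶜ) := measure_union_le _ _
      _ ≤ μ Gd + (μ (⋃ l, T l) + μ (msupport μ)ᶜ) := by
          gcongr
          exact measure_union_le _ _
      _ = μ Gd + μ (⋃ l, T l) := by rw [msupport_compl_null_s8 μ, add_zero]
      _ ≤ μ Gd + ∑ l : Fin k, μ (T l) := by
          gcongr
          exact (measure_iUnion_fintype_le μ T)
      _ ≤ μ Gd + ∑ _l : Fin k, b := by
          gcongr with l
          exact htube l
      _ = μ Gd + (k : ℝ≥0∞) * b := by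
          rw [Finset.sum_const, Finset.card_univ, Fintype.card_fin, nsmul_eq_mul]
  have hkey : (k : ℝ≥0∞) * b < ENNReal.ofReal (Cμ⁻¹ * (t / 2) ^ d) := by
    rw [hb, ← ENNReal.ofReal_natCast k, ← ENNReal.ofReal_mul (Nat.cast_nonneg _)]
    refine (ENNReal.ofReal_lt_ofReal_iff ?_).mpr ?_
    · have : (0:ℝ) < Cμ⁻¹ := by positivity
      positivity
    · exact key_ineq hd hC ht hk
  have hGpos : μ Gd ≠ 0 := by
    intro h0
    rw [h0, zero_add] at hbound
    exact absurd (le_trans hlow hbound) (not_le.mpr hkey)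
  obtain ⟨z, hz⟩ := nonempty_of_measure_ne_zero hGpos
  exact ⟨z, hz.1, hz.2.1, hz.2.2⟩

end escape



section constr
variable {H : Type*} [NormedAddCommGroup H] [InnerProductSpace ℝ H]
    [SecondCountableTopology H] [MeasurableSpace H] [BorelSpace H]
    {d : ℕ} {Cμ : ℝ} {μ : Measure H}

lemma aff_nonempty_lt (z : ℕ → H) {i : ℕ} (hi : 1 ≤ i) :
    ((affineSpan ℝ (z '' {l | l < i}) : Set H)).Nonempty :=
  ⟨z 0, subset_affineSpan ℝ _ ⟨0, hi, rfl⟩⟩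

lemma aff_fd_lt (z : ℕ → H) (i : ℕ) :
    FiniteDimensional ℝ (affineSpan ℝ (z '' {l | l < i})).direction := by
  rw [direction_affineSpan]
  exact finiteDimensional_vectorSpan_of_finite ℝ ((Set.finite_Iio i).image z)

lemma aff_finrank_lt (z : ℕ → H) {i : ℕ} (hi : 1 ≤ i) :
    Module.finrank ℝ (affineSpan ℝ (z '' {l | l < i})).direction ≤ i - 1 := by
  rw [direction_affineSpan]
  have hrange : z '' {l | l < i} = Set.range (fun a : Fin i => z a) := by
    ext y
    constructor
    · rintro ⟨l, hl, rfl⟩; exact ⟨⟨l, hl⟩, rfl⟩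
    · rintro ⟨a, rfl⟩; exact ⟨a, a.2, rfl⟩
  rw [hrange]
  exact finrank_vectorSpan_range_le ℝ _ (by rw [Fintype.card_fin]; omega)

lemma aff_nonempty_ne (hd : 1 ≤ d) (z : ℕ → H) {j : ℕ} :
    ((affineSpan ℝ (z '' {l | l ≤ d ∧ l ≠ j}) : Set H)).Nonempty := by
  by_cases hj : j = 0
  · exact ⟨z 1, subset_affineSpan ℝ _ ⟨1, ⟨hd, by omega⟩, rfl⟩⟩
  · exact ⟨z 0, subset_affineSpan ℝ _ ⟨0, ⟨by omega, fun h => hj h.symm⟩, rfl⟩⟩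

lemma aff_fd_ne (z : ℕ → H) (j : ℕ) :
    FiniteDimensional ℝ (affineSpan ℝ (z '' {l | l ≤ d ∧ l ≠ j})).direction := by
  rw [direction_affineSpan]
  refine finiteDimensional_vectorSpan_of_finite ℝ (Set.Finite.image z ?_)
  exact (Set.finite_Iic d).subset (fun l hl => hl.1)

lemma aff_finrank_ne (hd : 1 ≤ d) (z : ℕ → H) {j : ℕ} (hj : j ≤ d) :
    Module.finrank ℝ (affineSpan ℝ (z '' {l | l ≤ d ∧ l ≠ j})).direction ≤ d - 1 := by
  rw [direction_affineSpan]
  set g : Fin d → H := fun a => z (if (a : ℕ) < j then (a : ℕ) else (a : ℕ) + 1) with hg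
  have hsub : z '' {l | l ≤ d ∧ l ≠ j} ⊆ Set.range g := by
    rintro y ⟨l, ⟨hld, hlj⟩, rfl⟩
    by_cases hlt : l < j
    · refine ⟨⟨l, by omega⟩, ?_⟩
      simp only [hg, Fin.val_mk]
      rw [if_pos hlt]
    · have hgt : j < l := by omega
      refine ⟨⟨l - 1, by omega⟩, ?_⟩
      simp only [hg, Fin.val_mk]
      rw [if_neg (by omega)]
      congr 1
      omega
  haveI := finiteDimensional_vectorSpan_range ℝ g
  refine le_trans (Submodule.finrank_mono (vectorSpan_mono ℝ hsub)) ?_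
  exact finrank_vectorSpan_range_le ℝ g (by rw [Fintype.card_fin]; omega)

lemma config_exists (hd : 1 ≤ d) (hreg : IsDRegular d Cμ μ)
    {x : H} (hx : x ∈ msupport μ) {t : ℝ} (ht : 0 < t)
    (hdiam : ENNReal.ofReal t ≤ EMetric.diam (msupport μ)) :
    ∃ z : ℕ → H,
      (∀ i, i ≤ d + 1 → z i ∈ msupport μ ∧ z i ∈ closedBall x (t / 2)) ∧
      (∀ i, 1 ≤ i → i ≤ d → rhoConst d Cμ * t
        < Metric.infDist (z i) (affineSpan ℝ (z '' {l | l < i}))) ∧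
      (∀ j : ℕ, j ≤ d → rhoConst d Cμ * t
        < Metric.infDist (z (d + 1)) (affineSpan ℝ (z '' {l | l ≤ d ∧ l ≠ j}))) := by
  classical
  -- first, chains up to length k ≤ d
  have hchain : ∀ k, k ≤ d → ∃ z : ℕ → H,
      (∀ i, i ≤ k → z i ∈ msupport μ ∧ z i ∈ closedBall x (t / 2)) ∧
      (∀ i, 1 ≤ i → i ≤ k → rhoConst d Cμ * t
        < Metric.infDist (z i) (affineSpan ℝ (z '' {l | l < i}))) := by
    intro k
    induction k with
    | zero =>
        intro _
        exact ⟨fun _ => x, fun i hi => ⟨hx, mem_closedBall_self (by linarith)⟩,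
          fun i hi1 hi0 => absurd (le_trans hi1 hi0) (by omega)⟩
    | succ k ih =>
        intro hk1
        obtain ⟨z, hz1, hz2⟩ := ih (by omega)
        have hne : ((affineSpan ℝ (z '' {l | l < k + 1}) : Set H)).Nonempty :=
          aff_nonempty_lt z (by omega)
        haveI := aff_fd_lt z (k + 1)
        obtain ⟨z', hz's, hz'b, hz'd⟩ := escape_lemma hd hreg hx ht hdiam
          (k := 1) (by omega) (fun _ => affineSpan ℝ (z '' {l | l < k + 1}))
          (fun _ => hne) (fun _ => aff_fd_lt z (k + 1))
          (fun _ => le_trans (aff_finrank_lt z (i := k + 1) (by omega)) (by omega))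
        set zn : ℕ → H := fun i => if i < k + 1 then z i else z' with hzn
        have himg : ∀ i, i ≤ k + 1 → zn '' {l | l < i} = z '' {l | l < i} := by
          intro i hi
          refine Set.image_congr fun l hl => ?_
          have hl' : l < i := hl
          simp only [hzn]
          rw [if_pos (by omega)]
        refine ⟨zn, ?_, ?_⟩
        · intro i hi
          rcases Nat.lt_or_ge i (k + 1) with h | h
          · simp only [hzn]; rw [if_pos h]; exact hz1 i (by omega)
          · simp only [hzn]; rw [if_neg (by omega)]; exact ⟨hz's, hz'b⟩
        · intro i hi1 hik
          rw [himg i hik]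
          rcases Nat.lt_or_ge i (k + 1) with h | h
          · simp only [hzn]; rw [if_pos h]; exact hz2 i hi1 (by omega)
          · have : i = k + 1 := by omega
            subst this
            simp only [hzn]; rw [if_neg (by omega)]
            exact hz'd 0
  obtain ⟨z, hz1, hz2⟩ := hchain d le_rfl
  -- now escape the d+1 faces
  have hprops : ∀ l : Fin (d + 1),
      ((affineSpan ℝ (z '' {l' | l' ≤ d ∧ l' ≠ (l : ℕ)}) : Set H)).Nonempty :=
    fun l => aff_nonempty_ne hd z
  obtain ⟨z', hz's, hz'b, hz'd⟩ := escape_lemma hd hreg hx ht hdiam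
    (k := d + 1) le_rfl (fun l => affineSpan ℝ (z '' {l' | l' ≤ d ∧ l' ≠ (l : ℕ)}))
    hprops (fun l => aff_fd_ne z l) (fun l => aff_finrank_ne hd z (Nat.lt_succ_iff.mp l.isLt))
  set Z : ℕ → H := fun i => if i ≤ d then z i else z' with hZ
  have himg1 : ∀ i, i ≤ d → Z '' {l | l < i} = z '' {l | l < i} := by
    intro i hi
    refine Set.image_congr fun l hl => ?_
    have hl' : l < i := hl
    simp only [hZ]
    rw [if_pos (by omega)]
  have himg2 : ∀ j, Z '' {l | l ≤ d ∧ l ≠ j} = z '' {l | l ≤ d ∧ l ≠ j} := by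
    intro j
    refine Set.image_congr fun l hl => ?_
    simp only [hZ]
    rw [if_pos hl.1]
  refine ⟨Z, ?_, ?_, ?_⟩
  · intro i hi
    rcases Nat.lt_or_ge i (d + 1) with h | h
    · simp only [hZ]; rw [if_pos (by omega)]; exact hz1 i (by omega)
    · simp only [hZ]; rw [if_neg (by omega)]; exact ⟨hz's, hz'b⟩
  · intro i hi1 hid
    rw [himg1 i hid]
    simp only [hZ]
    rw [if_pos hid]
    exact hz2 i hi1 hid
  · intro j hj
    rw [himg2 j]
    simp only [hZ]
    rw [if_neg (by omega)]
    have := hz'd ⟨j, by omega⟩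
    simpa using this

end constr

section face
variable {H : Type*} [NormedAddCommGroup H] [InnerProductSpace ℝ H] {d : ℕ}

lemma face_dist (hd : 1 ≤ d) (z : ℕ → H) {r : ℝ}
    (h2 : ∀ i, 1 ≤ i → i ≤ d → r < Metric.infDist (z i) (affineSpan ℝ (z '' {l | l < i})))
    (h3 : ∀ j : ℕ, j ≤ d → r < Metric.infDist (z (d + 1))
      (affineSpan ℝ (z '' {l | l ≤ d ∧ l ≠ j})))
    (j : Fin (d + 2)) (a : Fin d) (w : H)
    (hw : w ∈ Submodule.span ℝ ((fun b : Fin d =>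
      z ((j.succAbove b.succ : Fin (d + 2)) : ℕ)
        - z ((j.succAbove 0 : Fin (d + 2)) : ℕ)) '' {b | b < a})) :
    r ≤ ‖z ((j.succAbove a.succ : Fin (d + 2)) : ℕ)
        - z ((j.succAbove 0 : Fin (d + 2)) : ℕ) - w‖ := by
  classical
  set m : ℕ := ((j.succAbove a.succ : Fin (d + 2)) : ℕ) with hm
  set i₀ : ℕ := ((j.succAbove 0 : Fin (d + 2)) : ℕ) with hi₀
  set S : Set ℕ := if m ≤ d then {l | l < m} else {l | l ≤ d ∧ l ≠ (j : ℕ)} with hSdef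
  have hmlt : ∀ b : Fin (d + 1), b < a.succ →
      ((j.succAbove b : Fin (d + 2)) : ℕ) < m := by
    intro b hb
    exact (Fin.strictMono_succAbove j) hb
  have hm1 : 1 ≤ m := by
    have := hmlt 0 (Fin.succ_pos a)
    omega
  have hmem : ∀ b : Fin (d + 1), b < a.succ → ((j.succAbove b : Fin (d + 2)) : ℕ) ∈ S := by
    intro b hb
    have hlt := hmlt b hb
    have hne : ((j.succAbove b : Fin (d + 2)) : ℕ) ≠ (j : ℕ) :=
      fun h => (Fin.succAbove_ne j b) (Fin.ext h)
    rw [hSdef]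
    split_ifs with hc
    · exact hlt
    · have hmax : m ≤ d + 1 := Nat.lt_succ_iff.mp (j.succAbove a.succ).isLt
      exact ⟨by omega, hne⟩
  have hi₀S : i₀ ∈ S := hmem 0 (Fin.succ_pos a)
  have hz₀ : z i₀ ∈ affineSpan ℝ (z '' S) := subset_affineSpan ℝ _ ⟨i₀, hi₀S, rfl⟩
  have hdist : r < Metric.infDist (z m) ((affineSpan ℝ (z '' S) : Set H)) := by
    by_cases hc : m ≤ d
    · rw [hSdef, if_pos hc]
      exact h2 m hm1 hc
    · have hmax : m ≤ d + 1 := Nat.lt_succ_iff.mp (j.succAbove a.succ).isLt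
      have hmd : m = d + 1 := by omega
      have hjd : (j : ℕ) ≤ d := by
        have hne : m ≠ (j : ℕ) :=
          fun h => (Fin.succAbove_ne j a.succ) (Fin.ext h)
        have := j.isLt
        omega
      rw [hSdef, if_neg hc, hmd]
      exact h3 (j : ℕ) hjd
  have hsub : Submodule.span ℝ ((fun b : Fin d =>
      z ((j.succAbove b.succ : Fin (d + 2)) : ℕ)
        - z ((j.succAbove 0 : Fin (d + 2)) : ℕ)) '' {b | b < a})
      ≤ (affineSpan ℝ (z '' S)).direction := by
    rw [Submodule.span_le]
    rintro u ⟨b, hb, rfl⟩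
    have hb' : (b.succ : Fin (d + 1)) < a.succ := Fin.succ_lt_succ_iff.mpr hb
    have h1 : z ((j.succAbove b.succ : Fin (d + 2)) : ℕ) ∈ affineSpan ℝ (z '' S) :=
      subset_affineSpan ℝ _ ⟨_, hmem b.succ hb', rfl⟩
    have := AffineSubspace.vsub_mem_direction h1 hz₀
    simpa [vsub_eq_sub] using this
  have hqmem : w + z i₀ ∈ affineSpan ℝ (z '' S) := by
    have := AffineSubspace.vadd_mem_of_mem_direction (hsub hw) hz₀
    simpa [vadd_eq_add] using this
  have hle : Metric.infDist (z m) ((affineSpan ℝ (z '' S) : Set H))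
      ≤ dist (z m) (w + z i₀) := Metric.infDist_le_dist_of_mem hqmem
  have heq : dist (z m) (w + z i₀) = ‖z m - z i₀ - w‖ := by
    rw [dist_eq_norm]
    congr 1
    abel
  rw [heq] at hle
  exact le_of_lt (lt_of_lt_of_le hdist hle)

end face

lemma abs_det_le_of_row_small {n : ℕ} (A : Matrix (Fin n) (Fin n) ℝ) (k : Fin n) {M ε : ℝ}
    (hM : 0 ≤ M) (hε : 0 ≤ ε) (hrow : ∀ j, |A k j| ≤ ε)
    (hoth : ∀ i j, i ≠ k → |A i j| ≤ M) :
    |A.det| ≤ n.factorial * (ε * M ^ (n - 1)) := by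
  classical
  rw [Matrix.det_apply]
  calc |∑ σ : Equiv.Perm (Fin n), Equiv.Perm.sign σ • ∏ i, A (σ i) i|
      ≤ ∑ σ : Equiv.Perm (Fin n), |Equiv.Perm.sign σ • ∏ i, A (σ i) i| :=
        Finset.abs_sum_le_sum_abs _ _
    _ ≤ ∑ _σ : Equiv.Perm (Fin n), ε * M ^ (n - 1) := by
        refine Finset.sum_le_sum fun σ _ => ?_
        have habs : |Equiv.Perm.sign σ • ∏ i, A (σ i) i| = |∏ i, A (σ i) i| := by
          rcases Int.units_eq_one_or (Equiv.Perm.sign σ) with h | h <;> simp [h]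
        rw [habs, Finset.abs_prod]
        set i₀ := σ⁻¹ k with hi₀
        rw [← Finset.mul_prod_erase Finset.univ _ (Finset.mem_univ i₀)]
        have h1 : |A (σ i₀) i₀| ≤ ε := by
          rw [hi₀, Equiv.Perm.coe_inv, Equiv.apply_symm_apply]
          exact hrow _
        have h2 : ∏ i ∈ Finset.univ.erase i₀, |A (σ i) i| ≤ M ^ (n - 1) := by
          have hcard : (Finset.univ.erase i₀).card = n - 1 := by
            rw [Finset.card_erase_of_mem (Finset.mem_univ _), Finset.card_univ,
              Fintype.card_fin]
          have hle : ∏ i ∈ Finset.univ.erase i₀, |A (σ i) i|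
              ≤ ∏ _i ∈ Finset.univ.erase i₀, M := by
            refine Finset.prod_le_prod (fun i _ => abs_nonneg _) fun i hi => ?_
            refine hoth _ _ fun h => ?_
            have : i = i₀ := by rw [hi₀, ← h, Equiv.Perm.coe_inv, Equiv.symm_apply_apply]
            exact (Finset.mem_erase.mp hi).1 this
          rwa [Finset.prod_const, hcard] at hle
        exact mul_le_mul h1 h2 (Finset.prod_nonneg fun i _ => abs_nonneg _) hε
    _ = n.factorial * (ε * M ^ (n - 1)) := by
        rw [Finset.sum_const, Finset.card_univ, Fintype.card_perm, Fintype.card_fin,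
          nsmul_eq_mul]

lemma abs_det_sub_det_le {n : ℕ} (A B : Matrix (Fin n) (Fin n) ℝ) {M ε : ℝ}
    (hM : 0 ≤ M) (hε : 0 ≤ ε)
    (hA : ∀ i j, |A i j| ≤ M) (hB : ∀ i j, |B i j| ≤ M)
    (hAB : ∀ i j, |A i j - B i j| ≤ ε) :
    |A.det - B.det| ≤ n * (n.factorial * (ε * M ^ (n - 1))) := by
  classical
  set C : ℕ → Matrix (Fin n) (Fin n) ℝ :=
    fun k => Matrix.of fun i j => if (i : ℕ) < k then B i j else A i j with hC
  have hC0 : C 0 = A := by ext i j; simp [hC]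
  have hCn : C n = B := by ext i j; simp [hC, i.2]
  have hstep : ∀ k (hk : k < n), |(C k).det - (C (k + 1)).det|
      ≤ n.factorial * (ε * M ^ (n - 1)) := by
    intro k hk
    set p : Fin n := ⟨k, hk⟩ with hp
    have hCk : C k = Matrix.updateRow (C k) p ((C k) p) := (Matrix.updateRow_eq_self _ _).symm
    have hrowp : (C k) p = A p := by
      ext j; simp [hC, hp]
    have hCk1 : C (k + 1) = Matrix.updateRow (C k) p (B p) := by
      ext i j
      by_cases hip : i = p
      · subst hip; rw [Matrix.updateRow_self]; simp [hC, hp]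
      · rw [Matrix.updateRow_ne hip]
        have : (i : ℕ) ≠ k := fun h => hip (Fin.ext (by simp [hp, h]))
        simp only [hC, Matrix.of_apply]
        by_cases h2 : (i : ℕ) < k
        · rw [if_pos h2, if_pos (by omega)]
        · rw [if_neg h2, if_neg (by omega)]
    have hsplit : (C k).det = (C (k + 1)).det
        + (Matrix.updateRow (C k) p (A p - B p)).det := by
      have h2 : B p + (A p - B p) = A p := by abel
      have h1 : (Matrix.updateRow (C k) p (B p + (A p - B p))).det
          = (C (k + 1)).det + (Matrix.updateRow (C k) p (A p - B p)).det := by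
        rw [Matrix.det_updateRow_add, hCk1]
      rw [h2] at h1
      rw [← h1]
      conv_lhs => rw [hCk, hrowp]
    rw [hsplit]
    simp only [add_sub_cancel_left]
    refine abs_det_le_of_row_small _ p hM hε ?_ ?_
    · intro j
      rw [Matrix.updateRow_self]
      exact hAB _ _
    · intro i j hip
      rw [Matrix.updateRow_ne hip]
      simp only [hC, Matrix.of_apply]
      split_ifs
      · exact hB _ _
      · exact hA _ _
  have htel : A.det - B.det = ∑ k ∈ Finset.range n, ((C k).det - (C (k + 1)).det) := by
    rw [Finset.sum_range_sub' (fun k => (C k).det), hC0, hCn]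
  rw [htel]
  calc |∑ k ∈ Finset.range n, ((C k).det - (C (k + 1)).det)|
      ≤ ∑ k ∈ Finset.range n, |(C k).det - (C (k + 1)).det| := Finset.abs_sum_le_sum_abs _ _
    _ ≤ ∑ _k ∈ Finset.range n, n.factorial * (ε * M ^ (n - 1)) :=
        Finset.sum_le_sum fun k hk => hstep k (Finset.mem_range.mp hk)
    _ = n * (n.factorial * (ε * M ^ (n - 1))) := by
        rw [Finset.sum_const, Finset.card_range, nsmul_eq_mul]

/-- d-separation of d-regular measures: there are δ_μ ∈ (0,1) and ω_μ > 0 (depending only on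
d, Cμ) such that every ball B(x,t) centered on supp μ with 0 < t ≤ diam supp μ contains
d+2 balls B(xᵢ, δ_μ t) centered on supp μ, any transversal of which has all its d-dimensional
faces of content at least ω_μ·t^d. -/
theorem d_separation_of_regular_measures {H : Type*} [NormedAddCommGroup H]
    [InnerProductSpace ℝ H] [CompleteSpace H] [SecondCountableTopology H]
    [MeasurableSpace H] [BorelSpace H]
    (d : ℕ) (hd : 1 ≤ d) (hdim : (d : Cardinal) < Module.rank ℝ H)
    (Cμ : ℝ) (μ : Measure H) (hreg : IsDRegular d Cμ μ) :
    ∃ δ ω : ℝ, 0 < δ ∧ δ < 1 ∧ 0 < ω ∧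
      ∀ x ∈ msupport μ, ∀ t : ℝ, 0 < t →
        ENNReal.ofReal t ≤ EMetric.diam (msupport μ) →
          ∃ p : Fin (d + 2) → H,
            (∀ i, p i ∈ msupport μ) ∧
            (∀ i, closedBall (p i) (δ * t) ⊆ closedBall x t) ∧
            ∀ q : Fin (d + 2) → H, (∀ i, q i ∈ closedBall (p i) (δ * t)) →
              ∀ j : Fin (d + 2), ω * t ^ d ≤ simplexContent d (q ∘ j.succAbove) := by
  classical
  have hC : (1 : ℝ) ≤ Cμ := hreg.1
  set ρ := rhoConst d Cμ with hρdef
  have hρ : 0 < ρ := rhoConst_pos hC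
  have hρ8 : ρ ≤ 1 / 8 := rhoConst_le_eighth
  have hd0 : (0 : ℝ) < d := by exact_mod_cast Nat.lt_of_lt_of_le Nat.zero_lt_one hd
  set Kd : ℝ := d * d.factorial * 6 * 4 ^ (d - 1) with hKd
  have hKd0 : 0 < Kd := by
    have hfac : (0 : ℝ) < d.factorial := by exact_mod_cast d.factorial_pos
    positivity
  set δ : ℝ := min (1 / 2) (ρ ^ (2 * d) / (2 * Kd)) with hδdef
  have hδ0 : 0 < δ := lt_min (by norm_num) (by positivity)
  have hδhalf : δ ≤ 1 / 2 := min_le_left _ _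
  have hδK : Kd * δ ≤ ρ ^ (2 * d) / 2 := by
    have h1 : δ ≤ ρ ^ (2 * d) / (2 * Kd) := min_le_right _ _
    calc Kd * δ ≤ Kd * (ρ ^ (2 * d) / (2 * Kd)) := mul_le_mul_of_nonneg_left h1 hKd0.le
      _ = ρ ^ (2 * d) / 2 := by field_simp
  set ω : ℝ := Real.sqrt (ρ ^ (2 * d) / 2) with hωdef
  have hω0 : 0 < ω := Real.sqrt_pos.mpr (by positivity)
  refine ⟨δ, ω, hδ0, lt_of_le_of_lt hδhalf (by norm_num), hω0, ?_⟩
  intro x hx t ht hdiam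
  obtain ⟨z, hz1, hz2, hz3⟩ := config_exists hd hreg hx ht hdiam
  set p : Fin (d + 2) → H := fun i => z (i : ℕ) with hp
  have hpball : ∀ i : Fin (d + 2), dist (p i) x ≤ t / 2 :=
    fun i => (hz1 (i : ℕ) (Nat.lt_succ_iff.mp i.isLt)).2
  have hδt : δ * t ≤ t / 2 := by nlinarith
  refine ⟨p, fun i => (hz1 (i : ℕ) (Nat.lt_succ_iff.mp i.isLt)).1, ?_, ?_⟩
  · intro i y hy
    rw [mem_closedBall] at hy ⊢
    calc dist y x ≤ dist y (p i) + dist (p i) x := dist_triangle _ _ _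
      _ ≤ δ * t + t / 2 := add_le_add hy (hpball i)
      _ ≤ t := by linarith
  · intro q hq j
    set pf : Fin (d + 1) → H := p ∘ j.succAbove with hpf
    set qf : Fin (d + 1) → H := q ∘ j.succAbove with hqf
    set pv : Fin d → H := fun b => pf b.succ - pf 0 with hpv
    set qv : Fin d → H := fun b => qf b.succ - qf 0 with hqv
    set A : Matrix (Fin d) (Fin d) ℝ := Matrix.of fun a b => (⟪qv a, qv b⟫ : ℝ) with hA
    set B : Matrix (Fin d) (Fin d) ℝ := Matrix.of fun a b => (⟪pv a, pv b⟫ : ℝ) with hB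
    have hqp : ∀ i : Fin (d + 2), dist (q i) (p i) ≤ δ * t := fun i => hq i
    have hqball : ∀ i : Fin (d + 2), dist (q i) x ≤ t := fun i =>
      calc dist (q i) x ≤ dist (q i) (p i) + dist (p i) x := dist_triangle _ _ _
        _ ≤ δ * t + t / 2 := add_le_add (hqp i) (hpball i)
        _ ≤ t := by linarith
    have hpvn : ∀ b, ‖pv b‖ ≤ t := by
      intro b
      have : ‖pv b‖ = dist (pf b.succ) (pf 0) := by rw [dist_eq_norm]
      rw [this]
      calc dist (pf b.succ) (pf 0) ≤ dist (pf b.succ) x + dist x (pf 0) := dist_triangle _ _ _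
        _ ≤ t / 2 + t / 2 := add_le_add (hpball _) (by rw [dist_comm]; exact hpball _)
        _ = t := by ring
    have hqvn : ∀ b, ‖qv b‖ ≤ 2 * t := by
      intro b
      have : ‖qv b‖ = dist (qf b.succ) (qf 0) := by rw [dist_eq_norm]
      rw [this]
      calc dist (qf b.succ) (qf 0) ≤ dist (qf b.succ) x + dist x (qf 0) := dist_triangle _ _ _
        _ ≤ t + t := add_le_add (hqball _) (by rw [dist_comm]; exact hqball _)
        _ = 2 * t := by ring
    have hqpv : ∀ b, ‖qv b - pv b‖ ≤ 2 * (δ * t) := by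
      intro b
      have heq : qv b - pv b = (qf b.succ - pf b.succ) - (qf 0 - pf 0) := by
        simp only [hqv, hpv]; abel
      rw [heq]
      calc ‖(qf b.succ - pf b.succ) - (qf 0 - pf 0)‖
          ≤ ‖qf b.succ - pf b.succ‖ + ‖qf 0 - pf 0‖ := norm_sub_le _ _
        _ ≤ δ * t + δ * t := add_le_add
            (by rw [← dist_eq_norm]; exact hqp _) (by rw [← dist_eq_norm]; exact hqp _)
        _ = 2 * (δ * t) := by ring
    have hMA : ∀ a b, |A a b| ≤ 4 * t ^ 2 := by
      intro a b
      calc |A a b| ≤ ‖qv a‖ * ‖qv b‖ := abs_real_inner_le_norm _ _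
        _ ≤ (2 * t) * (2 * t) := mul_le_mul (hqvn a) (hqvn b) (norm_nonneg _) (by linarith)
        _ = 4 * t ^ 2 := by ring
    have hMB : ∀ a b, |B a b| ≤ 4 * t ^ 2 := by
      intro a b
      calc |B a b| ≤ ‖pv a‖ * ‖pv b‖ := abs_real_inner_le_norm _ _
        _ ≤ (2 * t) * (2 * t) := mul_le_mul (le_trans (hpvn a) (by linarith))
            (le_trans (hpvn b) (by linarith)) (norm_nonneg _) (by linarith)
        _ = 4 * t ^ 2 := by ring
    have hdiffE : ∀ a b, |A a b - B a b| ≤ 6 * δ * t ^ 2 := by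
      intro a b
      have hsplit : A a b - B a b = ⟪qv a - pv a, qv b⟫ + ⟪pv a, qv b - pv b⟫ := by
        simp only [hA, hB, Matrix.of_apply, inner_sub_left, inner_sub_right]
        ring
      rw [hsplit]
      calc |⟪qv a - pv a, qv b⟫ + ⟪pv a, qv b - pv b⟫|
          ≤ |⟪qv a - pv a, qv b⟫| + |⟪pv a, qv b - pv b⟫| := abs_add_le _ _
        _ ≤ ‖qv a - pv a‖ * ‖qv b‖ + ‖pv a‖ * ‖qv b - pv b‖ :=
            add_le_add (abs_real_inner_le_norm _ _) (abs_real_inner_le_norm _ _)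
        _ ≤ (2 * (δ * t)) * (2 * t) + t * (2 * (δ * t)) := add_le_add
            (mul_le_mul (hqpv a) (hqvn b) (norm_nonneg _) (by positivity))
            (mul_le_mul (hpvn a) (hqpv b) (norm_nonneg _) (by linarith))
        _ = 6 * δ * t ^ 2 := by ring
    have hdet : |A.det - B.det| ≤ d * (d.factorial * ((6 * δ * t ^ 2) * (4 * t ^ 2) ^ (d - 1))) :=
      abs_det_sub_det_le A B (by positivity) (by positivity) hMA hMB hdiffE
    have hRHSeq : (d : ℝ) * (d.factorial * ((6 * δ * t ^ 2) * (4 * t ^ 2) ^ (d - 1)))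
        = Kd * δ * t ^ (2 * d) := by
      rw [hKd, mul_pow]
      have ht2 : (t ^ 2) ^ (d - 1) * t ^ 2 = t ^ (2 * d) := by
        have hd1 : d - 1 + 1 = d := by omega
        rw [← pow_succ, hd1, mul_comm 2 d, pow_mul]
        ring
      rw [← ht2]
      ring
    have hdetB : ρ ^ (2 * d) * t ^ (2 * d) ≤ B.det := by
      have hface := gram_det_ge d pv (ρ * t) (by positivity) ?_
      · rw [mul_pow] at hface
        exact hface
      · intro a w hw
        exact face_dist hd z hz2 hz3 j a w hw
    have hdetA : ρ ^ (2 * d) / 2 * t ^ (2 * d) ≤ A.det := by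
      have h1 : B.det - A.det ≤ |A.det - B.det| := by
        rw [abs_sub_comm]; exact le_abs_self _
      rw [hRHSeq] at hdet
      have h2 : Kd * δ * t ^ (2 * d) ≤ ρ ^ (2 * d) / 2 * t ^ (2 * d) :=
        mul_le_mul_of_nonneg_right hδK (by positivity)
      nlinarith [hdet, h1, h2, hdetB]
    have hfinal : ω * t ^ d ≤ Real.sqrt A.det := by
      rw [Real.le_sqrt (by positivity) (le_trans (by positivity) hdetA)]
      have hωsq : (ω * t ^ d) ^ 2 = ρ ^ (2 * d) / 2 * t ^ (2 * d) := by
        rw [mul_pow, hωdef, Real.sq_sqrt (by positivity), ← pow_mul]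
        ring_nf
      rw [hωsq]
      exact hdetA
    exact hfinal
end
end

section
/- Let P and P̃ be the orthogonal projections of a Hilbert space H onto two d-planes L and L̃, and suppose L ≠ L̃ but L ∩ L̃ contains a (d−1)-plane L'. Let P' be the orthogonal projection onto L', and let α be the dihedral angle between L and L̃ along L'. Then for every y ∈ H, dist(P̃(y), P(P̃(y))) = sin(α) · dist(P̃(y), P'(P̃(y))). -/
open Metric EuclideanGeometry

noncomputable section

/-- Uniqueness characterization of the affine orthogonal projection. -/
lemma orthProj_eq_of {H : Type*} [NormedAddCommGroup H] [InnerProductSpace ℝ H]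
    (s : AffineSubspace ℝ H) [Nonempty s] [s.direction.HasOrthogonalProjection]
    {p q : H} (hq : q ∈ s) (h : ∀ w ∈ s.direction, (inner ℝ (p - q) w : ℝ) = 0) :
    (orthogonalProjection s p : H) = q := by
  set r : H := (orthogonalProjection s p : H) with hr
  have hrs : r ∈ s := orthogonalProjection_mem p
  have h1 : r - q ∈ s.direction := by
    simpa using AffineSubspace.vsub_mem_direction hrs hq
  have hperp : p - r ∈ s.directionᗮ := by
    simpa using EuclideanGeometry.vsub_orthogonalProjection_mem_direction_orthogonal s p
  have e1 : (inner ℝ (r - p) (r - q) : ℝ) = 0 := by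
    have h2 := (Submodule.mem_orthogonal' s.direction _).mp hperp (r - q) h1
    have hneg : r - p = -(p - r) := by abel
    rw [hneg, inner_neg_left, h2, neg_zero]
  have h3 : (inner ℝ (r - q) (r - q) : ℝ) = 0 := by
    calc (inner ℝ (r - q) (r - q) : ℝ)
        = (inner ℝ ((r - p) + (p - q)) (r - q) : ℝ) := by
          rw [show (r - p) + (p - q) = r - q by abel]
      _ = (inner ℝ (r - p) (r - q) : ℝ) + (inner ℝ (p - q) (r - q) : ℝ) := inner_add_left _ _ _
      _ = 0 := by rw [e1, h (r - q) h1, add_zero]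
  exact sub_eq_zero.mp (inner_self_eq_zero.mp h3)

/-- If `S ≤ T`, `finrank S = d - 1`, `finrank T = d ≥ 1`, and `v ∈ T` is a unit vector
orthogonal to `S`, then `S ⊔ span {v} = T`. -/
lemma sup_span_eq_of_perp {H : Type*} [NormedAddCommGroup H] [InnerProductSpace ℝ H]
    {S T : Submodule ℝ H} {d : ℕ} (hd : 1 ≤ d) (hST : S ≤ T)
    (hS : Module.finrank ℝ S = d - 1) (hT : Module.finrank ℝ T = d)
    {v : H} (hvT : v ∈ T) (hv1 : ‖v‖ = 1) (hvperp : ∀ w ∈ S, (inner ℝ v w : ℝ) = 0) :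
    S ⊔ (ℝ ∙ v) = T := by
  have hvne : v ≠ 0 := by intro h; rw [h, norm_zero] at hv1; norm_num at hv1
  have hvS : v ∉ S := by
    intro hmem
    have := hvperp v hmem
    rw [real_inner_self_eq_norm_mul_norm, hv1] at this
    norm_num at this
  haveI : FiniteDimensional ℝ T := Module.finite_of_finrank_pos (by omega)
  haveI : FiniteDimensional ℝ S := Submodule.finiteDimensional_of_le hST
  have hle : S ⊔ (ℝ ∙ v) ≤ T :=
    sup_le hST ((Submodule.span_singleton_le_iff_mem v T).mpr hvT)
  have hinf : S ⊓ (ℝ ∙ v) = ⊥ := by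
    rw [eq_bot_iff]
    rintro z ⟨hzS, hzv⟩
    obtain ⟨t, rfl⟩ := Submodule.mem_span_singleton.mp hzv
    rcases eq_or_ne t 0 with rfl | ht
    · simp
    · exact absurd (by simpa [smul_smul, inv_mul_cancel₀ ht] using S.smul_mem t⁻¹ hzS) hvS
  have hrank : Module.finrank ℝ ((S ⊔ (ℝ ∙ v) : Submodule ℝ H)) = d := by
    have := Submodule.finrank_sup_add_finrank_inf_eq S (ℝ ∙ v)
    rw [hinf, hS, finrank_span_singleton hvne] at this
    simp at this
    omega
  exact Submodule.eq_of_le_of_finrank_le hle (by rw [hT, hrank])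

/-- Dihedral angle formula: if L and L̃ are distinct d-planes meeting in a (d−1)-plane L',
u and v are unit vectors in the directions of L and L̃ orthogonal to L' on the same side
(⟪u,v⟫ ≥ 0), and α is the angle between u and v, then for every y ∈ H,
dist(P̃(y), P(P̃(y))) = sin(α) · dist(P̃(y), P'(P̃(y))), where P, P̃, P' are the orthogonal
projections onto L, L̃, L'. -/
theorem dihedral_angle_projection_formula {H : Type*} [NormedAddCommGroup H]
    [InnerProductSpace ℝ H] [CompleteSpace H]
    (d : ℕ) (hd : 1 ≤ d) (L Lt L' : AffineSubspace ℝ H)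
    [Nonempty L] [Nonempty Lt] [Nonempty L']
    [L.direction.HasOrthogonalProjection] [Lt.direction.HasOrthogonalProjection]
    [L'.direction.HasOrthogonalProjection]
    (hLd : Module.finrank ℝ L.direction = d) (hLtd : Module.finrank ℝ Lt.direction = d)
    (hne : L ≠ Lt) (hsub : (L' : Set H) ⊆ (L : Set H) ∩ (Lt : Set H))
    (hL'd : Module.finrank ℝ L'.direction = d - 1)
    (u v : H) (hu : u ∈ L.direction) (hv : v ∈ Lt.direction)
    (hu1 : ‖u‖ = 1) (hv1 : ‖v‖ = 1)
    (huperp : ∀ w ∈ L'.direction, (inner ℝ u w : ℝ) = 0)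
    (hvperp : ∀ w ∈ L'.direction, (inner ℝ v w : ℝ) = 0)
    (hside : 0 ≤ (inner ℝ u v : ℝ)) :
    ∀ y : H,
      dist ((orthogonalProjection Lt y : H))
          ((orthogonalProjection L ((orthogonalProjection Lt y : H)) : H)) =
        Real.sin (InnerProductGeometry.angle u v) *
          dist ((orthogonalProjection Lt y : H))
            ((orthogonalProjection L' ((orthogonalProjection Lt y : H)) : H)) := by
  intro y
  set x : H := (orthogonalProjection Lt y : H) with hxdef
  have hxLt : x ∈ Lt := orthogonalProjection_mem y
  set p' : H := (orthogonalProjection L' x : H) with hp'def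
  have hp'L' : p' ∈ L' := orthogonalProjection_mem x
  have hL'L : L' ≤ L := fun z hz => (hsub hz).1
  have hL'Lt : L' ≤ Lt := fun z hz => (hsub hz).2
  have hdirL : L'.direction ≤ L.direction := AffineSubspace.direction_le hL'L
  have hdirLt : L'.direction ≤ Lt.direction := AffineSubspace.direction_le hL'Lt
  have hsupL : L'.direction ⊔ (ℝ ∙ u) = L.direction :=
    sup_span_eq_of_perp hd hdirL hL'd hLd hu hu1 huperp
  have hsupLt : L'.direction ⊔ (ℝ ∙ v) = Lt.direction :=
    sup_span_eq_of_perp hd hdirLt hL'd hLtd hv hv1 hvperp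
  -- decompose x - p' as t • v
  have hxp'mem : x - p' ∈ Lt.direction := by
    simpa using AffineSubspace.vsub_mem_direction hxLt (hL'Lt hp'L')
  have hxp'perp : x - p' ∈ L'.directionᗮ := by
    simpa using EuclideanGeometry.vsub_orthogonalProjection_mem_direction_orthogonal L' x
  obtain ⟨t, ht⟩ : ∃ t : ℝ, x - p' = t • v := by
    rw [← hsupLt] at hxp'mem
    obtain ⟨w, hw, z, hz, hwz⟩ := Submodule.mem_sup.mp hxp'mem
    obtain ⟨t, rfl⟩ := Submodule.mem_span_singleton.mp hz
    have hw0 : w = 0 := by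
      have h1 : (inner ℝ (x - p') w : ℝ) = 0 :=
        (Submodule.mem_orthogonal' L'.direction _).mp hxp'perp w hw
      rw [← hwz, inner_add_left, real_inner_smul_left,
        hvperp w hw, mul_zero, add_zero] at h1
      exact inner_self_eq_zero.mp h1
    exact ⟨t, by rw [← hwz, hw0, zero_add]⟩
  set c : ℝ := inner ℝ u v with hc
  -- compute the projection of x onto L
  have hq : (orthogonalProjection L x : H) = (t * c) • u + p' := by
    apply orthProj_eq_of
    · have := AffineSubspace.vadd_mem_of_mem_direction
        (Submodule.smul_mem L.direction (t * c) hu) (hL'L hp'L')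
      simpa using this
    · intro w hw
      rw [← hsupL] at hw
      obtain ⟨w', hw', z, hz, hwz⟩ := Submodule.mem_sup.mp hw
      obtain ⟨s, rfl⟩ := Submodule.mem_span_singleton.mp hz
      have hdiff : x - ((t * c) • u + p') = t • v - (t * c) • u := by
        rw [show x - ((t * c) • u + p') = (x - p') - (t * c) • u by abel, ht]
      rw [hdiff, ← hwz]
      have e1 : (inner ℝ v w' : ℝ) = 0 := hvperp w' hw'
      have e2 : (inner ℝ u w' : ℝ) = 0 := huperp w' hw'
      have e3 : (inner ℝ u u : ℝ) = 1 := by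
        rw [real_inner_self_eq_norm_mul_norm, hu1]; norm_num
      have e4 : (inner ℝ v u : ℝ) = c := by rw [hc, real_inner_comm]
      simp only [inner_sub_left, inner_add_right, real_inner_smul_left, real_inner_smul_right,
        e1, e2, e3, e4, mul_zero, mul_one]
      ring
  -- distances
  have hdist' : dist x p' = |t| := by
    rw [dist_eq_norm, ht, norm_smul, hv1, mul_one, Real.norm_eq_abs]
  have hnorm : ‖v - c • u‖ = Real.sqrt (1 - c ^ 2) := by
    rw [norm_eq_sqrt_real_inner]
    congr 1
    have e3 : (inner ℝ u u : ℝ) = 1 := by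
      rw [real_inner_self_eq_norm_mul_norm, hu1]; norm_num
    have e5 : (inner ℝ v v : ℝ) = 1 := by
      rw [real_inner_self_eq_norm_mul_norm, hv1]; norm_num
    have e4 : (inner ℝ v u : ℝ) = c := by rw [hc, real_inner_comm]
    simp only [inner_sub_left, inner_sub_right, real_inner_smul_left, real_inner_smul_right,
      e3, e4, e5, ← hc]
    ring
  have hsin : Real.sin (InnerProductGeometry.angle u v) = Real.sqrt (1 - c ^ 2) := by
    rw [InnerProductGeometry.angle, hu1, hv1, mul_one, div_one, Real.sin_arccos]
  have hdist : dist x ((orthogonalProjection L x : H)) = |t| * Real.sqrt (1 - c ^ 2) := by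
    rw [hq, dist_eq_norm, show x - ((t * c) • u + p') = t • (v - c • u) by
      rw [show x - ((t * c) • u + p') = (x - p') - (t * c) • u by abel, ht,
        smul_sub, smul_smul], norm_smul, Real.norm_eq_abs, hnorm]
  rw [hdist, hdist', hsin]
  ring
end
end

section
/- Let X = (x₀,…,x_{d+1}) ∈ H^{d+2} with min(X) > 0 and min(X) ≥ λ·diam(X) for some 0 < λ ≤ 1. Then for any two indices 0 ≤ i, j ≤ d+1, p_d sin_{x_i}(X) ≥ λ^{d(d+1)/2} · p_d sin_{x_j}(X). -/
open Metric Finset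

noncomputable section

/-- If min(X) > 0 and min(X) ≥ λ·diam(X) with 0 < λ ≤ 1, then for any vertices i, j,
p_d sin_{x_i}(X) ≥ λ^{d(d+1)/2}·p_d sin_{x_j}(X). -/
theorem polarSin_comparable {H : Type*} [NormedAddCommGroup H] [InnerProductSpace ℝ H]
    (d : ℕ) (hd : 1 ≤ d) (X : Fin (d + 2) → H)
    (l : ℝ) (hl0 : 0 < l) (hl1 : l ≤ 1)
    (hmin : 0 < tmin X) (hsep : l * tdiam X ≤ tmin X) (i j : Fin (d + 2)) :
    l ^ ((d * (d + 1) : ℝ) / 2) * polarSin X j ≤ polarSin X i := by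
  have hM : 0 ≤ simplexContent (d + 1) X := Real.sqrt_nonneg _
  have hbdd : BddBelow {r : ℝ | ∃ a b : Fin (d + 2), a ≠ b ∧ r = dist (X a) (X b)} :=
    ⟨0, by rintro r ⟨a, b, hab, rfl⟩; exact dist_nonneg⟩
  have hmin_le : ∀ a b : Fin (d + 2), a ≠ b → tmin X ≤ dist (X a) (X b) :=
    fun a b hab => csInf_le hbdd ⟨a, b, hab, rfl⟩
  have hdiam : ∀ a b : Fin (d + 2), dist (X a) (X b) ≤ tdiam X :=
    fun a b => dist_le_diam_of_mem ((Set.finite_range X).isBounded) ⟨a, rfl⟩ ⟨b, rfl⟩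
  have hP : ∀ i : Fin (d + 2), 0 < ∏ k ∈ univ.erase i, dist (X k) (X i) := by
    intro i
    apply Finset.prod_pos
    intro k hk
    exact lt_of_lt_of_le hmin (hmin_le k i (Finset.mem_erase.mp hk).1)
  have hle : l ^ ((d * (d + 1) : ℝ) / 2) ≤ l ^ d := by
    rw [← Real.rpow_natCast l d]
    apply Real.rpow_le_rpow_of_exponent_ge hl0 hl1
    have h1 : (1 : ℝ) ≤ (d : ℝ) := by exact_mod_cast hd
    nlinarith
  have hld : (0 : ℝ) < l ^ d := pow_pos hl0 d
  by_cases hij : i = j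
  · subst hij
    have h1 : l ^ ((d * (d + 1) : ℝ) / 2) ≤ 1 :=
      Real.rpow_le_one hl0.le hl1 (by positivity)
    have h0 : (0 : ℝ) < l ^ ((d * (d + 1) : ℝ) / 2) := Real.rpow_pos_of_pos hl0 _
    have hps : 0 ≤ polarSin X i := div_nonneg hM (hP i).le
    nlinarith
  · have key : l ^ d * ∏ k ∈ univ.erase i, dist (X k) (X i)
        ≤ ∏ k ∈ univ.erase j, dist (X k) (X j) := by
      have hji : j ∈ univ.erase i := Finset.mem_erase.mpr ⟨Ne.symm hij, Finset.mem_univ j⟩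
      have hij' : i ∈ univ.erase j := Finset.mem_erase.mpr ⟨hij, Finset.mem_univ i⟩
      rw [← Finset.prod_erase_mul _ _ hji, ← Finset.prod_erase_mul _ _ hij',
        show (univ.erase j).erase i = (univ.erase i).erase j from by
          ext k; simp only [Finset.mem_erase]; tauto,
        dist_comm (X i) (X j)]
      set S := (univ.erase i).erase j with hS
      have hcard : S.card = d := by
        rw [hS, Finset.card_erase_of_mem hji, Finset.card_erase_of_mem (Finset.mem_univ i),
          Finset.card_univ, Fintype.card_fin]
        omega
      have hprod : ∏ k ∈ S, (l * dist (X k) (X i)) ≤ ∏ k ∈ S, dist (X k) (X j) := by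
        apply Finset.prod_le_prod
        · intro k _; positivity
        · intro k hk
          have hkj : k ≠ j := (Finset.mem_erase.mp hk).1
          calc l * dist (X k) (X i) ≤ l * tdiam X :=
                mul_le_mul_of_nonneg_left (hdiam k i) hl0.le
            _ ≤ tmin X := hsep
            _ ≤ dist (X k) (X j) := hmin_le k j hkj
      rw [Finset.prod_mul_distrib, Finset.prod_const, hcard] at hprod
      have hdij : 0 < dist (X j) (X i) := lt_of_lt_of_le hmin (hmin_le j i (Ne.symm hij))
      calc l ^ d * ((∏ k ∈ S, dist (X k) (X i)) * dist (X j) (X i))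
          = (l ^ d * ∏ k ∈ S, dist (X k) (X i)) * dist (X j) (X i) := by ring
        _ ≤ (∏ k ∈ S, dist (X k) (X j)) * dist (X j) (X i) :=
            mul_le_mul_of_nonneg_right hprod hdij.le
    calc l ^ ((d * (d + 1) : ℝ) / 2) * polarSin X j
        ≤ l ^ d * polarSin X j := by
          have hps : 0 ≤ polarSin X j := div_nonneg hM (hP j).le
          exact mul_le_mul_of_nonneg_right hle hps
      _ ≤ polarSin X i := by
          simp only [polarSin]
          rw [← mul_div_assoc, div_le_div_iff₀ (hP j) (hP i)]
          nlinarith [mul_le_mul_of_nonneg_left key hM]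
end
end
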